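/- arXiv:2202.04282 — 9 statements merged into one kernel-verified Lean document; each statement's English description precedes it below -/
import Mathlib

section
/- Every irreducible linear order is indecomposable. In particular, for any linear order L, the linear order ω ×ₗ L (an ω-indexed sum of copies of L) is indecomposable: if ω ×ₗ L embeds into A + B for linear orders A, B, then ω ×ₗ L embeds into A or into B. -/
/- `A ⊕ₗ B` is the ordered sum; `ℕ ×ₗ L = ∑_{n∈ω} L` and
`ℕᵒᵈ ×ₗ L = ∑_{n∈ω*} L` (the index coordinate is the more significant one). -/

/-- A linear order is indecomposable if whenever it embeds into a sum `A + B`,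
it embeds into `A` or into `B`. -/
def IsIndecomposable (L : Type) [LinearOrder L] : Prop :=
  ∀ (A B : Type) [LinearOrder A] [LinearOrder B],
    Nonempty (L ↪o (A ⊕ₗ B)) → Nonempty (L ↪o A) ∨ Nonempty (L ↪o B)

/-- A linear order is irreducible if it is a singleton or isomorphic to
`ω ×ₗ L'` or `ω* ×ₗ L'` for some linear order `L'`. -/
def IsIrredLO (L : Type) [LinearOrder L] : Prop :=
  Nonempty (L ≃o PUnit.{1}) ∨
    ∃ (L' : Type) (_ : LinearOrder L'),
      Nonempty (L ≃o (ℕ ×ₗ L')) ∨ Nonempty (L ≃o (ℕᵒᵈ ×ₗ L'))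


open Sum

section aux

/-- Shift embedding of `ℕ ×ₗ L` into itself. -/
def shiftEmb (L : Type) [LinearOrder L] (k : ℕ) : (ℕ ×ₗ L) ↪o (ℕ ×ₗ L) :=
  OrderEmbedding.ofStrictMono (fun x => toLex ((ofLex x).1 + k, (ofLex x).2)) (by
    intro x y hxy
    have h' := Prod.Lex.lt_iff.1 hxy
    refine Prod.Lex.lt_iff.2 ?_
    rcases h' with h | ⟨h1, h2⟩
    · exact Or.inl (by dsimp; omega)
    · exact Or.inr ⟨by dsimp; omega, h2⟩)

@[simp] lemma shiftEmb_apply (L : Type) [LinearOrder L] (k : ℕ) (x : ℕ ×ₗ L) :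
    shiftEmb L k x = toLex ((ofLex x).1 + k, (ofLex x).2) := rfl

/-- Shift embedding of `ℕᵒᵈ ×ₗ L` into itself. -/
def shiftEmb' (L : Type) [LinearOrder L] (k : ℕ) : (ℕᵒᵈ ×ₗ L) ↪o (ℕᵒᵈ ×ₗ L) :=
  OrderEmbedding.ofStrictMono
    (fun x => toLex (OrderDual.toDual (OrderDual.ofDual (ofLex x).1 + k), (ofLex x).2)) (by
    intro x y hxy
    have h' := Prod.Lex.lt_iff.1 hxy
    refine Prod.Lex.lt_iff.2 ?_
    rcases h' with h | ⟨h1, h2⟩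
    · refine Or.inl ?_
      have h2 : OrderDual.ofDual (ofLex y).1 < OrderDual.ofDual (ofLex x).1 := h
      exact OrderDual.toDual_lt_toDual.2 (by omega)
    · refine Or.inr ⟨by dsimp; rw [h1], h2⟩)

@[simp] lemma shiftEmb'_apply (L : Type) [LinearOrder L] (k : ℕ) (x : ℕᵒᵈ ×ₗ L) :
    shiftEmb' L k x
      = toLex (OrderDual.toDual (OrderDual.ofDual (ofLex x).1 + k), (ofLex x).2) := rfl

lemma natLex_case (L : Type) [LinearOrder L] (A B : Type) [LinearOrder A] [LinearOrder B]
    (f : (ℕ ×ₗ L) ↪o (A ⊕ₗ B)) :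
    Nonempty ((ℕ ×ₗ L) ↪o A) ∨ Nonempty ((ℕ ×ₗ L) ↪o B) := by
  by_cases h : ∀ x, ∃ a, f x = toLex (Sum.inl a)
  · left
    refine ⟨OrderEmbedding.ofStrictMono (fun x => (h x).choose) ?_⟩
    intro x y hxy
    have hf := f.strictMono hxy
    rw [(h x).choose_spec, (h y).choose_spec] at hf
    exact Sum.Lex.inl_lt_inl_iff.1 hf
  · right
    push_neg at h
    obtain ⟨x₀, hx₀⟩ := h
    obtain ⟨b₀, hb₀⟩ : ∃ b, f x₀ = toLex (Sum.inr b) := by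
      rcases hy : ofLex (f x₀) with a | b
      · exact absurd (by rw [← hy]; exact (toLex_ofLex _).symm) (hx₀ a)
      · exact ⟨b, by rw [← hy]; exact (toLex_ofLex _).symm⟩
    set g := shiftEmb L ((ofLex x₀).1 + 1) with hg
    have key : ∀ y, ∃ b, f (g y) = toLex (Sum.inr b) := by
      intro y
      have hlt : x₀ < g y := by
        refine Prod.Lex.lt_iff.2 (Or.inl ?_)
        simp [hg]; exact Nat.lt_add_left _ (Nat.lt_succ_self _)
      have hor := f.strictMono hlt
      rw [hb₀] at hor
      rcases hz : ofLex (f (g y)) with a | b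
      · have : toLex (Sum.inr b₀) < toLex (Sum.inl a) := by
          rwa [show f (g y) = toLex (Sum.inl a) from by
            rw [← hz]; exact (toLex_ofLex _).symm] at hor
        exact absurd this Sum.Lex.not_inr_lt_inl
      · exact ⟨b, by rw [← hz]; exact (toLex_ofLex _).symm⟩
    refine ⟨OrderEmbedding.ofStrictMono (fun y => (key y).choose) ?_⟩
    intro x y hxy
    have hf := f.strictMono (g.strictMono hxy)
    rw [(key x).choose_spec, (key y).choose_spec] at hf
    exact Sum.Lex.inr_lt_inr_iff.1 hf

lemma natLexDual_case (L : Type) [LinearOrder L] (A B : Type) [LinearOrder A] [LinearOrder B]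
    (f : (ℕᵒᵈ ×ₗ L) ↪o (A ⊕ₗ B)) :
    Nonempty ((ℕᵒᵈ ×ₗ L) ↪o A) ∨ Nonempty ((ℕᵒᵈ ×ₗ L) ↪o B) := by
  by_cases h : ∀ x, ∃ b, f x = toLex (Sum.inr b)
  · right
    refine ⟨OrderEmbedding.ofStrictMono (fun x => (h x).choose) ?_⟩
    intro x y hxy
    have hf := f.strictMono hxy
    rw [(h x).choose_spec, (h y).choose_spec] at hf
    exact Sum.Lex.inr_lt_inr_iff.1 hf
  · left
    push_neg at h
    obtain ⟨x₀, hx₀⟩ := h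
    obtain ⟨a₀, ha₀⟩ : ∃ a, f x₀ = toLex (Sum.inl a) := by
      rcases hy : ofLex (f x₀) with a | b
      · exact ⟨a, by rw [← hy]; exact (toLex_ofLex _).symm⟩
      · exact absurd (by rw [← hy]; exact (toLex_ofLex _).symm) (hx₀ b)
    set g := shiftEmb' L (OrderDual.ofDual (ofLex x₀).1 + 1) with hg
    have key : ∀ y, ∃ a, f (g y) = toLex (Sum.inl a) := by
      intro y
      have hlt : g y < x₀ := by
        refine Prod.Lex.lt_iff.2 (Or.inl ?_)
        show OrderDual.ofDual (ofLex x₀).1 < _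
        simp [hg]; exact Nat.lt_add_left _ (Nat.lt_succ_self _)
      have hor := f.strictMono hlt
      rw [ha₀] at hor
      rcases hz : ofLex (f (g y)) with a | b
      · exact ⟨a, by rw [← hz]; exact (toLex_ofLex _).symm⟩
      · have : toLex (Sum.inr b) < toLex (Sum.inl a₀) := by
          rwa [show f (g y) = toLex (Sum.inr b) from by
            rw [← hz]; exact (toLex_ofLex _).symm] at hor
        exact absurd this Sum.Lex.not_inr_lt_inl
    refine ⟨OrderEmbedding.ofStrictMono (fun y => (key y).choose) ?_⟩
    intro x y hxy
    have hf := f.strictMono (g.strictMono hxy)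
    rw [(key x).choose_spec, (key y).choose_spec] at hf
    exact Sum.Lex.inl_lt_inl_iff.1 hf

end aux

lemma indec_of_iso {L M : Type} [LinearOrder L] [LinearOrder M] (e : L ≃o M)
    (hM : IsIndecomposable M) : IsIndecomposable L := by
  intro A B _ _ hf
  obtain ⟨f⟩ := hf
  rcases hM A B ⟨(e.symm.toOrderEmbedding).trans f⟩ with hg | hg
  · obtain ⟨g⟩ := hg
    exact Or.inl ⟨e.toOrderEmbedding.trans g⟩
  · obtain ⟨g⟩ := hg
    exact Or.inr ⟨e.toOrderEmbedding.trans g⟩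

lemma indec_natLex (L : Type) [LinearOrder L] : IsIndecomposable (ℕ ×ₗ L) :=
  fun A B _ _ hf => natLex_case L A B hf.some

lemma indec_natLexDual (L : Type) [LinearOrder L] : IsIndecomposable (ℕᵒᵈ ×ₗ L) :=
  fun A B _ _ hf => natLexDual_case L A B hf.some

lemma indec_punit : IsIndecomposable PUnit.{1} := by
  intro A B _ _ hf
  obtain ⟨f⟩ := hf
  rcases hy : ofLex (f PUnit.unit) with a | b
  · exact Or.inl ⟨OrderEmbedding.ofStrictMono (fun _ => a)
      (fun x y hxy => absurd (Subsingleton.elim x y ▸ hxy) (lt_irrefl y))⟩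
  · exact Or.inr ⟨OrderEmbedding.ofStrictMono (fun _ => b)
      (fun x y hxy => absurd (Subsingleton.elim x y ▸ hxy) (lt_irrefl y))⟩

/-- Every irreducible linear order is indecomposable; in particular `ω ×ₗ L`
is indecomposable for every linear order `L`. -/
theorem stmt_1 :
    (∀ (L : Type) [LinearOrder L], IsIrredLO L → IsIndecomposable L) ∧
      (∀ (L : Type) [LinearOrder L], IsIndecomposable (ℕ ×ₗ L)) := by
  constructor
  · intro L _ hL
    rcases hL with he | ⟨L', _, he | he⟩
    · exact indec_of_iso he.some indec_punit
    · exact indec_of_iso he.some (indec_natLex L')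
    · exact indec_of_iso he.some (indec_natLexDual L')
  · exact fun L _ => indec_natLex L
end

section
/- The linear order ω ×ₗ L is indecomposable for every linear order L: if there is an order embedding of ∑_{n ∈ ω} L into L₁ + L₂, then either ∑_{n ∈ ω} L embeds into L₁, or ∑_{n ∈ ω} L embeds into L₂. -/
/- `ℕ ×ₗ L` is the lexicographic product with the `ℕ`-coordinate dominant,
i.e. `∑_{n ∈ ω} L`, ω-many consecutive copies of `L`.
`L₁ ⊕ₗ L₂` is the ordered sum. -/

/-- `ω ×ₗ L` is indecomposable: any order embedding of `∑_{n∈ω} L` into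
`L₁ + L₂` yields an embedding into `L₁` or into `L₂`. -/
theorem stmt_2 (L L₁ L₂ : Type) [LinearOrder L] [LinearOrder L₁] [LinearOrder L₂]
    (h : Nonempty ((ℕ ×ₗ L) ↪o (L₁ ⊕ₗ L₂))) :
    Nonempty ((ℕ ×ₗ L) ↪o L₁) ∨ Nonempty ((ℕ ×ₗ L) ↪o L₂) := by
  obtain ⟨f⟩ := h
  by_cases hc : ∀ x : ℕ ×ₗ L, ∃ y : L₁, f x = toLex (Sum.inl y)
  · left
    refine ⟨OrderEmbedding.ofStrictMono (fun x => (hc x).choose) ?_⟩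
    intro a b hab
    have ha := (hc a).choose_spec
    have hb := (hc b).choose_spec
    have : f a < f b := f.strictMono hab
    rw [ha, hb, Sum.Lex.inl_lt_inl_iff] at this
    exact this
  · right
    push_neg at hc
    obtain ⟨x₀, hx₀⟩ := hc
    obtain ⟨z₀, hz₀⟩ : ∃ z₀ : L₂, f x₀ = toLex (Sum.inr z₀) := by
      rcases heq : ofLex (f x₀) with y | z
      · exact absurd (by rw [← heq]; rfl) (hx₀ y)
      · exact ⟨z, by rw [← heq]; rfl⟩
    -- shift embedding
    set n₀ : ℕ := (ofLex x₀).1 with hn₀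
    have key : ∀ x : ℕ ×ₗ L, ∃ z : L₂,
        f (toLex ((ofLex x).1 + n₀ + 1, (ofLex x).2)) = toLex (Sum.inr z) := by
      intro x
      have hlt : x₀ < toLex ((ofLex x).1 + n₀ + 1, (ofLex x).2) := by
        have : toLex (ofLex x₀) < toLex ((ofLex x).1 + n₀ + 1, (ofLex x).2) :=
          Prod.Lex.lt_iff.2 (Or.inl (by simp only [ofLex_toLex]; omega))
        simpa using this
      have hlt2 : toLex (Sum.inr z₀) < f (toLex ((ofLex x).1 + n₀ + 1, (ofLex x).2)) := by
        rw [← hz₀]; exact f.strictMono hlt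
      rcases heq : ofLex (f (toLex ((ofLex x).1 + n₀ + 1, (ofLex x).2))) with y | z
      · exfalso
        have : f (toLex ((ofLex x).1 + n₀ + 1, (ofLex x).2)) = toLex (Sum.inl y) := by
          rw [← heq]; rfl
        rw [this] at hlt2
        exact Sum.Lex.not_inr_lt_inl hlt2
      · exact ⟨z, by rw [← heq]; rfl⟩
    refine ⟨OrderEmbedding.ofStrictMono (fun x => (key x).choose) ?_⟩
    intro a b hab
    have ha := (key a).choose_spec
    have hb := (key b).choose_spec
    have hshift : toLex ((ofLex a).1 + n₀ + 1, (ofLex a).2)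
        < toLex ((ofLex b).1 + n₀ + 1, (ofLex b).2) := by
      have hab' : toLex (ofLex a) < toLex (ofLex b) := by simpa using hab
      rcases Prod.Lex.lt_iff.1 hab' with h1 | ⟨h1, h2⟩
      · exact Prod.Lex.lt_iff.2 (Or.inl (by simp only [ofLex_toLex] at h1 ⊢; omega))
      · exact Prod.Lex.lt_iff.2 (Or.inr ⟨by simp only [ofLex_toLex] at h1 ⊢; omega, h2⟩)
    have : f (toLex ((ofLex a).1 + n₀ + 1, (ofLex a).2))
        < f (toLex ((ofLex b).1 + n₀ + 1, (ofLex b).2)) := f.strictMono hshift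
    rw [ha, hb, Sum.Lex.inr_lt_inr_iff] at this
    exact this
end

section
/- If L ×ₗ ℤ (i.e., ℤ-many consecutive copies of L) is an indecomposable linear order, then L is indecomposable. -/
section aux
variable {A B : Type} [LinearOrder A] [LinearOrder B]

/-- 0 for `inl`, 1 for `inr`. -/
private def sideVal : A ⊕ B → ℤ := fun s => match s with | .inl _ => 0 | .inr _ => 1

private lemma sideVal_mem (s : A ⊕ B) : sideVal s = 0 ∨ sideVal s = 1 := by
  cases s <;> simp [sideVal]

private lemma sideVal_mono {s t : A ⊕ₗ B} (h : s ≤ t) :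
    sideVal (ofLex s) ≤ sideVal (ofLex t) := by
  rcases hs : ofLex s with a | b <;> rcases ht : ofLex t with a' | b' <;>
    simp [sideVal]
  have hs' : s = toLex (Sum.inr b) := congrArg toLex hs
  have ht' : t = toLex (Sum.inl a') := congrArg toLex ht
  rw [hs', ht'] at h
  exact absurd h Sum.Lex.not_inr_le_inl

/-- Block index of a point of `ℤ ×ₗ (A ⊕ₗ B)`. -/
private def eIdx : (ℤ ×ₗ (A ⊕ₗ B)) → ℤ :=
  fun p => 2 * (ofLex p).1 + sideVal (ofLex (ofLex p).2)

private lemma eIdx_mono : Monotone (eIdx (A := A) (B := B)) := by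
  intro p q hpq
  rcases Prod.Lex.le_iff.mp hpq with h | ⟨h1, h2⟩
  · have := sideVal_mem (ofLex (ofLex p).2)
    have := sideVal_mem (ofLex (ofLex q).2)
    unfold eIdx; omega
  · have := sideVal_mono h2
    unfold eIdx; omega

variable {L : Type} [LinearOrder L]

private lemma copy_lt {n m : ℤ} {x y : L} (h : n < m ∨ (n = m ∧ x < y)) :
    (toLex (n, x) : ℤ ×ₗ L) < toLex (m, y) :=
  Prod.Lex.lt_iff.mpr (by simpa using h)

/-- If one whole copy of `L` lands in a single block, then `L` embeds into `A` or `B`. -/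
private lemma extract_lemma (g : (ℤ ×ₗ L) → (ℤ ×ₗ (A ⊕ₗ B))) (hg : StrictMono g)
    (a : L) (n₀ : ℤ)
    (hconst : ∀ x : L, eIdx (g (toLex (n₀, x))) = eIdx (g (toLex (n₀, a)))) :
    Nonempty (L ↪o A) ∨ Nonempty (L ↪o B) := by
  set q := g (toLex (n₀, a)) with hq
  rcases hside : ofLex (ofLex q).2 with α₀ | β₀
  · -- everything in an `A`-block
    left
    have key : ∀ x : L, (ofLex (g (toLex (n₀, x)))).1 = (ofLex q).1 ∧
        ∃ α : A, ofLex (ofLex (g (toLex (n₀, x)))).2 = Sum.inl α := by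
      intro x
      have he := hconst x
      unfold eIdx at he
      rw [hside] at he
      rcases hx : ofLex (ofLex (g (toLex (n₀, x)))).2 with α | β
      · rw [hx] at he
        simp only [sideVal] at he
        exact ⟨by omega, α, rfl⟩
      · rw [hx] at he
        simp only [sideVal] at he
        omega
    refine ⟨OrderEmbedding.ofStrictMono (fun x => ((key x).2).choose) ?_⟩
    intro x y hxy
    have hlt : g (toLex (n₀, x)) < g (toLex (n₀, y)) := hg (copy_lt (Or.inr ⟨rfl, hxy⟩))
    rcases Prod.Lex.lt_iff.mp hlt with h | ⟨h1, h2⟩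
    · have h' : (ofLex (g (toLex (n₀, x)))).1 < (ofLex (g (toLex (n₀, y)))).1 := h
      rw [(key x).1, (key y).1] at h'; exact absurd h' (lt_irrefl _)
    · have hx := ((key x).2).choose_spec
      have hy := ((key y).2).choose_spec
      have h2' : toLex (Sum.inl ((key x).2).choose : A ⊕ B) <
          toLex (Sum.inl ((key y).2).choose : A ⊕ B) := by
        rw [← hx, ← hy]; exact h2
      exact Sum.Lex.inl_lt_inl_iff.mp h2'
  · -- everything in a `B`-block
    right
    have key : ∀ x : L, (ofLex (g (toLex (n₀, x)))).1 = (ofLex q).1 ∧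
        ∃ β : B, ofLex (ofLex (g (toLex (n₀, x)))).2 = Sum.inr β := by
      intro x
      have he := hconst x
      unfold eIdx at he
      rw [hside] at he
      rcases hx : ofLex (ofLex (g (toLex (n₀, x)))).2 with α | β
      · rw [hx] at he
        simp only [sideVal] at he
        omega
      · rw [hx] at he
        simp only [sideVal] at he
        exact ⟨by omega, β, rfl⟩
    refine ⟨OrderEmbedding.ofStrictMono (fun x => ((key x).2).choose) ?_⟩
    intro x y hxy
    have hlt : g (toLex (n₀, x)) < g (toLex (n₀, y)) := hg (copy_lt (Or.inr ⟨rfl, hxy⟩))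
    rcases Prod.Lex.lt_iff.mp hlt with h | ⟨h1, h2⟩
    · have h' : (ofLex (g (toLex (n₀, x)))).1 < (ofLex (g (toLex (n₀, y)))).1 := h
      rw [(key x).1, (key y).1] at h'; exact absurd h' (lt_irrefl _)
    · have hx := ((key x).2).choose_spec
      have hy := ((key y).2).choose_spec
      have h2' : toLex (Sum.inr ((key x).2).choose : A ⊕ B) <
          toLex (Sum.inr ((key y).2).choose : A ⊕ B) := by
        rw [← hx, ← hy]; exact h2
      exact Sum.Lex.inr_lt_inr_iff.mp h2'

/-- A `ℤ`-indexed family with `ψ (n-1) < ψ (n+1)` is unbounded in both directions. -/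
private lemma zsteps (ψ : ℤ → ℤ) (step : ∀ n : ℤ, ψ (n - 1) < ψ (n + 1)) (k : ℕ) :
    ψ (-(2 * (k : ℤ))) ≤ ψ 0 - k ∧ ψ 0 + k ≤ ψ (2 * (k : ℤ)) := by
  induction k with
  | zero => simp
  | succ k ih =>
    constructor
    · have h1 := step (-(2 * (k : ℤ)) - 1)
      have e1 : (-(2 * ((k : ℤ) + 1))) = (-(2 * (k : ℤ)) - 1) - 1 := by ring
      have e2 : (-(2 * (k : ℤ)) - 1) + 1 = -(2 * (k : ℤ)) := by ring
      rw [e2] at h1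
      push_cast
      rw [e1]
      have := ih.1
      push_cast at this ⊢
      omega
    · have h1 := step (2 * (k : ℤ) + 1)
      have e1 : (2 * ((k : ℤ) + 1)) = (2 * (k : ℤ) + 1) + 1 := by ring
      have e2 : (2 * (k : ℤ) + 1) - 1 = 2 * (k : ℤ) := by ring
      rw [e2] at h1
      push_cast
      rw [e1]
      have := ih.2
      push_cast at this ⊢
      omega

/-- If every copy of `L` spans at least two blocks, `ψ n := eIdx (g (n, a))` satisfies
`ψ (n-1) < ψ (n+1)`. -/
private lemma psi_step (g : (ℤ ×ₗ L) → (ℤ ×ₗ (A ⊕ₗ B))) (hg : StrictMono g) (a : L)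
    (hnc : ∀ n : ℤ, ∃ x : L, eIdx (g (toLex (n, x))) ≠ eIdx (g (toLex (n, a))))
    (n : ℤ) :
    eIdx (g (toLex (n - 1, a))) < eIdx (g (toLex (n + 1, a))) := by
  obtain ⟨x, hx⟩ := hnc n
  have hm1 : eIdx (g (toLex (n - 1, a))) ≤ eIdx (g (toLex (n, x))) :=
    eIdx_mono (hg (copy_lt (Or.inl (by omega)))).le
  have hm2 : eIdx (g (toLex (n, x))) ≤ eIdx (g (toLex (n + 1, a))) :=
    eIdx_mono (hg (copy_lt (Or.inl (by omega)))).le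
  have hm3 : eIdx (g (toLex (n - 1, a))) ≤ eIdx (g (toLex (n, a))) :=
    eIdx_mono (hg (copy_lt (Or.inl (by omega)))).le
  have hm4 : eIdx (g (toLex (n, a))) ≤ eIdx (g (toLex (n + 1, a))) :=
    eIdx_mono (hg (copy_lt (Or.inl (by omega)))).le
  omega

end aux

/-- If `L ×ₗ ℤ` (ℤ-many consecutive copies of `L`) is indecomposable,
then so is `L`. -/
theorem stmt_3 (L : Type) [LinearOrder L] (h : IsIndecomposable (ℤ ×ₗ L)) :
    IsIndecomposable L := by
  intro A B _ _ ⟨f⟩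
  rcases isEmpty_or_nonempty L with hL | hNE
  · exact Or.inl ⟨OrderEmbedding.ofStrictMono (fun x => isEmptyElim x)
      (fun x => isEmptyElim x)⟩
  obtain ⟨a⟩ := hNE
  -- the pointwise embedding into `ℤ ×ₗ (A ⊕ₗ B)`
  set F : (ℤ ×ₗ L) → (ℤ ×ₗ (A ⊕ₗ B)) :=
    fun m => toLex ((ofLex m).1, f (ofLex m).2) with hF
  have hFmono : StrictMono F := by
    intro p q hpq
    rcases Prod.Lex.lt_iff.mp hpq with h' | ⟨h1, h2⟩
    · exact Prod.Lex.lt_iff.mpr (Or.inl h')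
    · exact Prod.Lex.lt_iff.mpr (Or.inr ⟨h1, f.strictMono h2⟩)
  -- split the target at block 0
  set A' : Type := {p : ℤ ×ₗ (A ⊕ₗ B) // eIdx p ≤ 0} with hA'
  set B' : Type := {p : ℤ ×ₗ (A ⊕ₗ B) // 1 ≤ eIdx p} with hB'
  have hsplit : Nonempty ((ℤ ×ₗ L) ↪o (A' ⊕ₗ B')) := by
    refine ⟨OrderEmbedding.ofStrictMono
      (fun m => if hc : eIdx (F m) ≤ 0 then toLex (Sum.inl ⟨F m, hc⟩)
        else toLex (Sum.inr ⟨F m, by omega⟩)) ?_⟩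
    intro p q hpq
    have hFlt : F p < F q := hFmono hpq
    have hFle : eIdx (F p) ≤ eIdx (F q) := eIdx_mono hFlt.le
    by_cases h1 : eIdx (F p) ≤ 0 <;> by_cases h2 : eIdx (F q) ≤ 0 <;>
      simp only [h1, h2, dif_pos, dif_neg, not_false_iff]
    · exact Sum.Lex.inl_lt_inl_iff.mpr (Subtype.mk_lt_mk.mpr hFlt)
    · exact Sum.Lex.inl_lt_inr _ _
    · exact absurd hFle (by omega)
    · exact Sum.Lex.inr_lt_inr_iff.mpr (Subtype.mk_lt_mk.mpr hFlt)
  rcases h A' B' hsplit with hcase | hcase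
  · -- image in A' : blocks bounded above by 0
    obtain ⟨g'⟩ := hcase
    set g : (ℤ ×ₗ L) → (ℤ ×ₗ (A ⊕ₗ B)) := fun m => (g' m).1 with hg
    have hgmono : StrictMono g := fun p q hpq => Subtype.coe_lt_coe.mpr (g'.strictMono hpq)
    by_cases hx : ∃ n : ℤ, ∀ x : L, eIdx (g (toLex (n, x))) = eIdx (g (toLex (n, a)))
    · obtain ⟨n₀, hn₀⟩ := hx
      exact extract_lemma g hgmono a n₀ hn₀
    · exfalso
      push_neg at hx
      have step := psi_step g hgmono a hx
      set ψ : ℤ → ℤ := fun n => eIdx (g (toLex (n, a))) with hψ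
      have hub : ∀ n : ℤ, ψ n ≤ 0 := fun n => (g' (toLex (n, a))).2
      obtain ⟨-, h2⟩ := zsteps ψ step ((0 - ψ 0).toNat + 1)
      have := hub (2 * (((0 - ψ 0).toNat + 1 : ℕ) : ℤ))
      omega
  · -- image in B' : blocks bounded below by 1
    obtain ⟨g'⟩ := hcase
    set g : (ℤ ×ₗ L) → (ℤ ×ₗ (A ⊕ₗ B)) := fun m => (g' m).1 with hg
    have hgmono : StrictMono g := fun p q hpq => Subtype.coe_lt_coe.mpr (g'.strictMono hpq)
    by_cases hx : ∃ n : ℤ, ∀ x : L, eIdx (g (toLex (n, x))) = eIdx (g (toLex (n, a)))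
    · obtain ⟨n₀, hn₀⟩ := hx
      exact extract_lemma g hgmono a n₀ hn₀
    · exfalso
      push_neg at hx
      have step := psi_step g hgmono a hx
      set ψ : ℤ → ℤ := fun n => eIdx (g (toLex (n, a))) with hψ
      have hlb : ∀ n : ℤ, 1 ≤ ψ n := fun n => (g' (toLex (n, a))).2
      obtain ⟨h1, -⟩ := zsteps ψ step ((ψ 0).toNat + 1)
      have := hlb (-(2 * (((ψ 0).toNat + 1 : ℕ) : ℤ)))
      omega
end

section
/- For linear orders L₁, ..., Lₙ (n ≥ 1), there is an order isomorphism ω ×ₗ (L₁ + L₂ + ⋯ + Lₙ) ≅ L₁ + ω ×ₗ (L₂ + ⋯ + Lₙ + L₁), i.e., one may 'exude' the first summand out of an ω-indexed sum by cyclically permuting the summands. -/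
lemma aux_add_one_eq_zero {n : ℕ} (j : Fin (n+1)) : j + 1 = 0 ↔ j = Fin.last n := by
  rw [Fin.ext_iff, Fin.ext_iff, Fin.val_add_one]
  split <;> rename_i h <;> rw [Fin.ext_iff, Fin.val_last] at h <;> simp <;> omega

/-- Exuding the first summand out of an ω-sum:
`ω ×ₗ (L₀ + ⋯ + Lₙ) ≅ L₀ + ω ×ₗ (L₁ + ⋯ + Lₙ + L₀)`. -/
theorem stmt_5 (n : ℕ) (L : Fin (n + 1) → Type) [∀ i, LinearOrder (L i)] :
    Nonempty ((ℕ ×ₗ (Σₗ i, L i)) ≃o ((L 0) ⊕ₗ (ℕ ×ₗ (Σₗ i : Fin (n + 1), L (i + 1))))) := by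
  set g : ((L 0) ⊕ₗ (ℕ ×ₗ (Σₗ i : Fin (n + 1), L (i + 1)))) → (ℕ ×ₗ (Σₗ i, L i)) :=
    fun a => match ofLex a with
    | .inl y => toLex (0, toLex ⟨0, y⟩)
    | .inr p => toLex (if (ofLex (ofLex p).2).1 = Fin.last n then (ofLex p).1 + 1 else (ofLex p).1,
        toLex ⟨(ofLex (ofLex p).2).1 + 1, (ofLex (ofLex p).2).2⟩)
    with hg
  have hmono : StrictMono g := by
    rintro (y | ⟨k, j, z⟩) (y' | ⟨k', j', z'⟩) hab <;> change Sum.Lex (· < ·) (· < ·) _ _ at hab <;> cases hab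
    case inl.inl.inl h =>
      show toLex ((0:ℕ), toLex (⟨0, y⟩ : Σ i, L i)) < toLex ((0:ℕ), toLex (⟨0, y'⟩ : Σ i, L i))
      rw [Prod.Lex.lt_iff]
      right
      refine ⟨rfl, ?_⟩
      rw [Sigma.Lex.lt_def]
      exact Or.inr ⟨rfl, h⟩
    case inl.inr.sep =>
      show toLex ((0:ℕ), toLex (⟨0, y⟩ : Σ i, L i)) < toLex (if j' = Fin.last n then k' + 1 else k',
        toLex (⟨j' + 1, z'⟩ : Σ i, L i))
      rw [Prod.Lex.lt_iff]
      by_cases hj' : j' = Fin.last n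
      · left; simp [hj']
      · rcases Nat.eq_zero_or_pos k' with rfl | hk'
        · right
          refine ⟨by simp [hj'], ?_⟩
          rw [Sigma.Lex.lt_def]
          exact Or.inl (Fin.pos_of_ne_zero (fun h => hj' ((aux_add_one_eq_zero j').mp h)))
        · left; simpa [hj']
    case inr.inr.inr h =>
      show toLex (if j = Fin.last n then k + 1 else k, toLex (⟨j + 1, z⟩ : Σ i, L i)) <
        toLex (if j' = Fin.last n then k' + 1 else k', toLex (⟨j' + 1, z'⟩ : Σ i, L i))
      rw [Prod.Lex.lt_iff]
      replace h := Prod.Lex.lt_iff.mp (show toLex (k, toLex (⟨j, z⟩ : Σ i, L (i+1))) < toLex (k', toLex (⟨j', z'⟩ : Σ i, L (i+1))) from h)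
      dsimp only [ofLex_toLex] at h ⊢
      rcases h with hk | ⟨rfl, hs⟩
      · by_cases hj' : j' = Fin.last n
        · left; split_ifs <;> omega
        · by_cases hj : j = Fin.last n
          · rcases Nat.lt_or_ge (k + 1) k' with h1 | h1
            · left; simp [hj, hj', h1]
            · have h2 : k + 1 = k' := le_antisymm hk h1
              right
              refine ⟨by simp [hj, hj', h2], ?_⟩
              rw [Sigma.Lex.lt_def]
              left
              show j + 1 < j' + 1
              rw [(aux_add_one_eq_zero j).mpr hj]
              exact Fin.pos_of_ne_zero (fun h => hj' ((aux_add_one_eq_zero j').mp h))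
          · left; simp [hj, hj', hk]
      · rw [Sigma.Lex.lt_def] at hs
        rcases hs with hjj | ⟨h, hz⟩
        · have hj : j ≠ Fin.last n := fun h => not_lt_of_ge (Fin.le_last j') (h ▸ hjj)
          by_cases hj' : j' = Fin.last n
          · left; simp [hj, hj']
          · right
            refine ⟨by simp [hj, hj'], ?_⟩
            rw [Sigma.Lex.lt_def]
            left
            show j + 1 < j' + 1
            rw [Fin.lt_def, Fin.val_add_one, Fin.val_add_one]
            simp only [hj, hj', if_false]
            exact Nat.add_lt_add_right hjj 1
        · have hj2 : j = j' := h
          subst hj2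
          right
          refine ⟨rfl, ?_⟩
          rw [Sigma.Lex.lt_def]
          exact Or.inr ⟨rfl, hz⟩
  have key : ∀ (j : Fin (n+1)) (k : ℕ) (z : L (j+1)),
      g (toLex (Sum.inr (toLex (k, toLex ⟨j, z⟩)))) =
      toLex ((if j = Fin.last n then k+1 else k), toLex ⟨j+1, z⟩) := fun _ _ _ => rfl
  have hsurj : Function.Surjective g := by
    rintro ⟨k, i, z⟩
    by_cases hi : i = 0
    · subst hi
      rcases k with _ | k
      · exact ⟨toLex (Sum.inl z), rfl⟩
      · have h : Fin.last n + 1 = 0 := (aux_add_one_eq_zero _).mpr rfl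
        refine ⟨toLex (Sum.inr (toLex (k, toLex ⟨Fin.last n, cast (congrArg L h.symm) z⟩))), ?_⟩
        rw [key]
        rw [if_pos rfl]
        have hs : (⟨Fin.last n + 1, cast (congrArg L h.symm) z⟩ : Σ i, L i) = ⟨0, z⟩ :=
          Sigma.ext h (cast_heq _ z)
        exact congrArg (fun s => toLex (k + 1, toLex s)) hs
    · have h : (i - 1) + 1 = i := sub_add_cancel i 1
      have hne : i - 1 ≠ Fin.last n := fun hl =>
        hi (by rw [← h, hl, (aux_add_one_eq_zero _).mpr rfl])
      refine ⟨toLex (Sum.inr (toLex (k, toLex ⟨i - 1, cast (congrArg L h.symm) z⟩))), ?_⟩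
      rw [key]
      rw [if_neg hne]
      have hs : (⟨i - 1 + 1, cast (congrArg L h.symm) z⟩ : Σ i, L i) = ⟨i, z⟩ :=
        Sigma.ext h (cast_heq _ z)
      exact congrArg (fun s => toLex (k, toLex s)) hs
  exact ⟨(hmono.orderIsoOfSurjective g hsurj).symm⟩
end

section
/- For linear orders L₁, ..., Lₙ (n ≥ 1), there is an order isomorphism ω* ×ₗ (L₁ + ⋯ + Lₙ) ≅ ω* ×ₗ (Lₙ + L₁ + ⋯ + L_{n-1}) + Lₙ, i.e., the last summand can be exuded to the right of an ω*-indexed sum. -/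
/- The finite ordered sum `L₀ + L₁ + ⋯ + Lₙ` of the family `L : Fin (n+1) → Type`
is `Σₗ i, L i` (the lexicographic sigma order); `ℕᵒᵈ ×ₗ M = ∑_{k∈ω*} M` is
ω*-many consecutive copies of `M`, and `⊕ₗ` is the binary ordered sum.
The cyclic shift `i ↦ i - 1` in `Fin (n+1)` realizes `Lₙ + L₀ + ⋯ + L_{n-1}`. -/

open OrderDual

/-- Exuding the last summand to the right of an ω*-sum:
`ω* ×ₗ (L₀ + ⋯ + Lₙ) ≅ ω* ×ₗ (Lₙ + L₀ + ⋯ + L_{n-1}) + Lₙ`. -/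
theorem stmt_6 (n : ℕ) (L : Fin (n + 1) → Type) [∀ i, LinearOrder (L i)] :
    Nonempty ((ℕᵒᵈ ×ₗ (Σₗ i, L i)) ≃o
      ((ℕᵒᵈ ×ₗ (Σₗ i : Fin (n + 1), L (i - 1))) ⊕ₗ (L (Fin.last n)))) := by
  classical
  have hzero : (0 : Fin (n+1)) - 1 = Fin.last n := by
    apply Fin.ext; rw [Fin.sub_def]
    simp only [Fin.val_zero, Nat.add_zero, Fin.val_last, Fin.val_one']
    rcases Nat.eq_zero_or_pos n with hn | hn
    · subst hn; rfl
    · rw [Nat.mod_eq_of_lt (show (1:ℕ) < n+1 by omega), Nat.mod_eq_of_lt (by omega)]; omega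
  have hadd : ∀ i : Fin (n+1), i + 1 - 1 = i := by
    intro i; exact add_sub_cancel_right i 1
  have hsubval : ∀ j : Fin (n+1), j ≠ 0 → (j - 1).val = j.val - 1 := by
    intro j hj
    rw [Fin.sub_def]
    show (n + 1 - ((1 : Fin (n+1)).val) + j.val) % (n+1) = j.val - 1
    rw [Fin.val_one']
    have hj' : j.val ≠ 0 := fun hh => hj (Fin.ext hh)
    have hlt := j.isLt
    rcases Nat.eq_zero_or_pos n with hn | hn
    · omega
    · rw [Nat.mod_eq_of_lt (show (1:ℕ) < n+1 by omega)]
      rw [show (n + 1 - 1 + j.val) = (j.val - 1) + (n+1) by omega]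
      rw [Nat.add_mod_right, Nat.mod_eq_of_lt (by omega)]
  have hlastval : ∀ j : Fin (n+1), j ≠ 0 → j - 1 < Fin.last n := by
    intro j hj
    rw [Fin.lt_iff_val_lt_val, hsubval j hj, Fin.val_last]
    have h1 : 1 ≤ j.val := Nat.one_le_iff_ne_zero.mpr (fun hh => hj (Fin.ext hh))
    have h2 := j.isLt
    omega
  let g : ((ℕᵒᵈ ×ₗ (Σₗ i : Fin (n + 1), L (i - 1))) ⊕ₗ (L (Fin.last n))) →
      (ℕᵒᵈ ×ₗ (Σₗ i, L i)) := fun a =>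
    match a with
    | Sum.inl p =>
        toLex (toDual
          (if (ofLex (ofLex p).2).1 = 0 then ofDual (ofLex p).1 + 1
           else ofDual (ofLex p).1),
          toLex ⟨(ofLex (ofLex p).2).1 - 1, (ofLex (ofLex p).2).2⟩)
    | Sum.inr x => toLex (toDual 0, toLex ⟨Fin.last n, x⟩)
  have gmono : StrictMono g := by
    intro a b hab
    cases hab with
    | sep p x =>
        rcases p with ⟨k, s⟩
        rcases s with ⟨j, y⟩
        show toLex (toDual (if j = 0 then ofDual k + 1 else ofDual k), toLex (⟨j - 1, y⟩ : Σ i, L i))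
            < toLex (toDual 0, toLex (⟨Fin.last n, x⟩ : Σ i, L i))
        rw [Prod.Lex.lt_iff]
        by_cases hj : j = 0
        · left
          rw [if_pos hj]
          exact toDual_lt_toDual.mpr (Nat.succ_pos _)
        · rw [if_neg hj]
          rcases Nat.eq_zero_or_pos (ofDual k) with hk | hk
          · right
            refine ⟨congrArg toDual hk, ?_⟩
            rw [Sigma.Lex.lt_def]
            left
            exact hlastval j hj
          · left
            exact toDual_lt_toDual.mpr hk
    | inr h =>
        show toLex (toDual 0, toLex (⟨Fin.last n, _⟩ : Σ i, L i)) < toLex (toDual 0, toLex (⟨Fin.last n, _⟩ : Σ i, L i))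
        rw [Prod.Lex.lt_iff]
        right
        refine ⟨rfl, ?_⟩
        rw [Sigma.Lex.lt_def]
        right
        exact ⟨rfl, h⟩
    | inl h =>
        rename_i p q
        rcases p with ⟨k, s⟩
        rcases s with ⟨j, y⟩
        rcases q with ⟨k', s'⟩
        rcases s' with ⟨j', y'⟩
        show toLex (toDual (if j = 0 then ofDual k + 1 else ofDual k), toLex (⟨j - 1, y⟩ : Σ i, L i))
            < toLex (toDual (if j' = 0 then ofDual k' + 1 else ofDual k'), toLex (⟨j' - 1, y'⟩ : Σ i, L i))
        rw [Prod.Lex.lt_iff]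
        have h' : toLex ((k : ℕᵒᵈ), toLex (⟨j, y⟩ : Σ i : Fin (n+1), L (i - 1)))
            < toLex ((k' : ℕᵒᵈ), toLex (⟨j', y'⟩ : Σ i : Fin (n+1), L (i - 1))) := h
        rcases Prod.Lex.lt_iff.mp h' with hk | ⟨hk, hs⟩
        · -- k' < k as naturals
          have hkk : ofDual k' < ofDual k := hk
          by_cases hj : j = 0 <;> by_cases hj' : j' = 0 <;>
            simp only [hj, hj', if_pos, if_neg, if_true, if_false, ite_true, ite_false]
          · left; exact toDual_lt_toDual.mpr (Nat.succ_lt_succ hkk)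
          · left; exact toDual_lt_toDual.mpr (lt_of_lt_of_le hkk (Nat.le_succ _))
          · rcases lt_or_eq_of_le (Nat.succ_le_of_lt hkk) with h1 | h1
            · left; exact toDual_lt_toDual.mpr h1
            · right
              refine ⟨congrArg toDual h1.symm, ?_⟩
              rw [Sigma.Lex.lt_def]
              left
              show j - 1 < j' - 1
              rw [hj', hzero]
              exact hlastval j hj
          · left; exact toDual_lt_toDual.mpr hkk
        · -- k = k'
          have hkk : k = k' := hk
          subst hkk
          rcases Sigma.Lex.lt_def.mp hs with hjj | ⟨hjj, hyy⟩
          · -- j < j'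
            have hjj' : j < j' := hjj
            have hj'0 : j' ≠ 0 := by
              intro hh
              rw [hh] at hjj'
              exact absurd hjj' (Fin.not_lt_zero j)
            by_cases hj : j = 0
            · left
              rw [if_pos hj, if_neg hj'0]
              exact toDual_lt_toDual.mpr (Nat.lt_succ_self _)
            · right
              rw [if_neg hj, if_neg hj'0]
              refine ⟨rfl, ?_⟩
              rw [Sigma.Lex.lt_def]
              left
              show j - 1 < j' - 1
              rw [Fin.lt_iff_val_lt_val, hsubval j hj, hsubval j' hj'0]
              have h1 : 1 ≤ j.val := Nat.one_le_iff_ne_zero.mpr (fun hh => hj (Fin.ext hh))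
              have h2 : j.val < j'.val := hjj'
              omega
          · -- j = j'
            obtain rfl : j = j' := hjj
            right
            refine ⟨rfl, ?_⟩
            rw [Sigma.Lex.lt_def]
            right
            exact ⟨rfl, hyy⟩
  have gsurj : Function.Surjective g := by
    rintro ⟨k, s⟩
    rcases s with ⟨i, x⟩
    induction k using OrderDual.rec with
    | _ K =>
      by_cases hi : i = Fin.last n
      · subst hi
        rcases K with _ | m
        · exact ⟨Sum.inr x, rfl⟩
        · refine ⟨Sum.inl (toLex (toDual m, toLex ⟨0, cast (congrArg L hzero.symm) x⟩)), ?_⟩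
          show toLex (toDual (if (0 : Fin (n+1)) = 0 then m + 1 else m),
              toLex (⟨(0 : Fin (n+1)) - 1, cast (congrArg L hzero.symm) x⟩ : Σ i, L i))
            = toLex (toDual (m+1), toLex (⟨Fin.last n, x⟩ : Σ i, L i))
          rw [if_pos rfl]
          refine congrArg toLex (Prod.ext rfl ?_)
          refine congrArg toLex (Sigma.ext hzero ?_)
          exact cast_heq _ _
      · have hne : i + 1 ≠ 0 := by
          intro hh
          apply hi
          have := congrArg (· - 1) hh
          simpa [hadd, hzero] using this
        refine ⟨Sum.inl (toLex (toDual K, toLex ⟨i + 1, cast (congrArg L (hadd i).symm) x⟩)), ?_⟩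
        show toLex (toDual (if i + 1 = 0 then K + 1 else K),
            toLex (⟨(i + 1) - 1, cast (congrArg L (hadd i).symm) x⟩ : Σ i, L i))
          = toLex (toDual K, toLex (⟨i, x⟩ : Σ i, L i))
        rw [if_neg hne]
        refine congrArg toLex (Prod.ext rfl ?_)
        refine congrArg toLex (Sigma.ext (hadd i) ?_)
        exact cast_heq _ _
  exact ⟨(gmono.orderIsoOfSurjective g gsurj).symm⟩
end

section
/- A linear order L is scattered (ℚ does not order-embed into L) if and only if its Hausdorff rank is an ordinal (i.e., L^(α) is finite for some ordinal α). -/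
/-- The Hausdorff equivalence relations `∼_α`, defined by transfinite recursion:
`∼₀` is equality, and `x ∼_α y` iff for some `β < α` only finitely many
`∼_β`-classes meet the closed interval between `x` and `y`. -/
noncomputable def simRel (L : Type) [LinearOrder L] : Ordinal → L → L → Prop
  | α => fun x y => x = y ∨ ∃ β, ∃ _ : β < α,
      Set.Finite ((fun z => {w | simRel L β z w}) '' Set.uIcc x y)
  termination_by α => α

namespace Stmt7Aux

variable {L : Type} [LinearOrder L]

/-- The `∼_α`-class of `z`. -/
noncomputable def scl (L : Type) [LinearOrder L] (α : Ordinal) (z : L) : Set L :=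
  {w | simRel L α z w}

lemma simRel_iff (α : Ordinal) (x y : L) :
    simRel L α x y ↔ x = y ∨ ∃ β, β < α ∧ (scl L β '' Set.uIcc x y).Finite := by
  rw [simRel]
  constructor
  · rintro (h | ⟨β, hβ, h⟩)
    exacts [Or.inl h, Or.inr ⟨β, hβ, h⟩]
  · rintro (h | ⟨β, hβ, h⟩)
    exacts [Or.inl h, Or.inr ⟨β, hβ, h⟩]

lemma simRel_refl (α : Ordinal) (x : L) : simRel L α x x :=
  (simRel_iff α x x).2 (Or.inl rfl)

lemma simRel_mono {β α : Ordinal} (h : β ≤ α) {x y : L} (hxy : simRel L β x y) :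
    simRel L α x y := by
  rw [simRel_iff] at hxy ⊢
  rcases hxy with rfl | ⟨γ, hγ, hf⟩
  · exact Or.inl rfl
  · exact Or.inr ⟨γ, hγ.trans_le h, hf⟩

lemma simRel_symm {α : Ordinal} {x y : L} (h : simRel L α x y) : simRel L α y x := by
  rw [simRel_iff] at h ⊢
  rcases h with rfl | ⟨β, hβ, hf⟩
  · exact Or.inl rfl
  · exact Or.inr ⟨β, hβ, by rwa [Set.uIcc_comm]⟩

lemma simRel_convex {α : Ordinal} {x y z : L} (h : simRel L α x y) (hz : z ∈ Set.uIcc x y) :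
    simRel L α x z := by
  rw [simRel_iff] at h ⊢
  rcases h with rfl | ⟨β, hβ, hf⟩
  · left
    rw [Set.uIcc_self, Set.mem_singleton_iff] at hz
    exact hz.symm
  · right
    exact ⟨β, hβ, hf.subset (Set.image_mono
      (Set.uIcc_subset_uIcc Set.left_mem_uIcc hz))⟩

lemma simRel_trans : ∀ α : Ordinal, ∀ x y z : L,
    simRel L α x y → simRel L α y z → simRel L α x z := by
  intro α
  induction α using Ordinal.induction with
  | h α IH =>
  classical
  have classEq : ∀ β < α, ∀ u v : L, simRel L β u v → scl L β u = scl L β v := by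
    intro β hβ u v huv
    ext w
    simp only [scl, Set.mem_setOf_eq]
    exact ⟨fun h => IH β hβ _ _ _ (simRel_symm huv) h, fun h => IH β hβ _ _ _ huv h⟩
  have transfer : ∀ β γ : Ordinal, β ≤ γ → γ < α → ∀ I : Set L,
      (scl L β '' I).Finite → (scl L γ '' I).Finite := by
    intro β γ hβγ hγ I hfin
    set g : Set L → Set L := fun C => if h : C.Nonempty then scl L γ h.some else ∅ with hg
    have key : ∀ z ∈ I, scl L γ z = g (scl L β z) := by
      intro z hz
      have hne : (scl L β z).Nonempty := ⟨z, simRel_refl β z⟩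
      have h1 : simRel L β z hne.some := hne.some_mem
      rw [hg]
      simp only [dif_pos hne]
      exact classEq γ hγ _ _ (simRel_mono hβγ h1)
    have hsub : scl L γ '' I ⊆ g '' (scl L β '' I) := by
      rintro _ ⟨z, hz, rfl⟩
      exact ⟨scl L β z, ⟨z, hz, rfl⟩, (key z hz).symm⟩
    exact ((hfin.image g).subset hsub)
  intro x y z hxy hyz
  rw [simRel_iff] at hxy hyz ⊢
  rcases hxy with rfl | ⟨β₁, hβ₁, h₁⟩
  · exact hyz
  rcases hyz with rfl | ⟨β₂, hβ₂, h₂⟩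
  · exact Or.inr ⟨β₁, hβ₁, h₁⟩
  right
  have hm : max β₁ β₂ < α := max_lt hβ₁ hβ₂
  refine ⟨max β₁ β₂, hm, ?_⟩
  have f₁ := transfer β₁ _ (le_max_left β₁ β₂) hm _ h₁
  have f₂ := transfer β₂ _ (le_max_right β₁ β₂) hm _ h₂
  refine ((f₁.union f₂).subset ?_)
  rw [← Set.image_union]
  exact Set.image_mono Set.uIcc_subset_uIcc_union_uIcc

lemma class_eq {α : Ordinal} {u v : L} (h : simRel L α u v) : scl L α u = scl L α v := by
  ext w
  simp only [scl, Set.mem_setOf_eq]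
  exact ⟨fun hw => simRel_trans α _ _ _ (simRel_symm h) hw,
    fun hw => simRel_trans α _ _ _ h hw⟩

/-- An order embedding of `ℚ` into any open rational interval. -/
lemma ratEmb {q₁ q₂ : ℚ} (h : q₁ < q₂) : ∃ e : ℚ ↪o ℚ, ∀ r, e r ∈ Set.Ioo q₁ q₂ := by
  obtain ⟨a, ha₁, ha₂⟩ := exists_between h
  obtain ⟨b, hb₁, hb₂⟩ := exists_between ha₁
  haveI : Set.OrdConnected (Set.Ioo q₁ q₂) := Set.ordConnected_Ioo
  haveI : Nontrivial (Set.Ioo q₁ q₂) := by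
    refine ⟨⟨a, ha₁, ha₂⟩, ⟨b, hb₁, hb₂.trans ha₂⟩, ?_⟩
    simp only [ne_eq, Subtype.mk.injEq]
    exact (ne_of_gt hb₂)
  obtain ⟨E⟩ := Order.embedding_from_countable_to_dense ℚ (Set.Ioo q₁ q₂)
  exact ⟨E.trans (OrderEmbedding.subtype _), fun r => (E r).2⟩

lemma noRat : ∀ α : Ordinal, ∀ x y : L, simRel L α x y →
    ∀ f : ℚ ↪o L, ¬ (∀ q, f q ∈ Set.uIcc x y) := by
  intro α
  induction α using Ordinal.induction with
  | h α IH =>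
  intro x y hxy f hf
  rw [simRel_iff] at hxy
  rcases hxy with rfl | ⟨β, hβ, hfin⟩
  · have h0 : f 0 = x := by
      have := hf 0; rwa [Set.uIcc_self, Set.mem_singleton_iff] at this
    have h1 : f 1 = x := by
      have := hf 1; rwa [Set.uIcc_self, Set.mem_singleton_iff] at this
    have : (0 : ℚ) = 1 := f.injective (h0.trans h1.symm)
    norm_num at this
  · have hmap : Set.MapsTo (fun q : ℚ => scl L β (f q)) Set.univ
        (scl L β '' Set.uIcc x y) := fun q _ => ⟨f q, hf q, rfl⟩
    obtain ⟨q₁, -, q₂, -, hne, heq⟩ :=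
      Set.infinite_univ.exists_ne_map_eq_of_mapsTo hmap hfin
    obtain ⟨a, b, hab, habeq⟩ : ∃ a b : ℚ, a < b ∧ scl L β (f a) = scl L β (f b) := by
      rcases hne.lt_or_gt with h | h
      exacts [⟨q₁, q₂, h, heq⟩, ⟨q₂, q₁, h, heq.symm⟩]
    have hsim : simRel L β (f a) (f b) := by
      have : f b ∈ scl L β (f b) := simRel_refl β (f b)
      rw [← habeq] at this
      exact this
    obtain ⟨e, he⟩ := ratEmb hab
    refine IH β hβ (f a) (f b) hsim (e.trans f) ?_
    intro r
    have h1 := he r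
    rw [Set.uIcc_of_le (f.le_iff_le.2 hab.le)]
    exact ⟨f.le_iff_le.2 h1.1.le, f.le_iff_le.2 h1.2.le⟩

lemma scattered_of_finite (α : Ordinal) (h : (Set.range (scl L α)).Finite) :
    ¬ Nonempty (ℚ ↪o L) := by
  rintro ⟨f⟩
  have hmap : Set.MapsTo (fun q : ℚ => scl L α (f q)) Set.univ (Set.range (scl L α)) :=
    fun q _ => ⟨f q, rfl⟩
  obtain ⟨q₁, -, q₂, -, hne, heq⟩ := Set.infinite_univ.exists_ne_map_eq_of_mapsTo hmap h
  obtain ⟨a, b, hab, habeq⟩ : ∃ a b : ℚ, a < b ∧ scl L α (f a) = scl L α (f b) := by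
    rcases hne.lt_or_gt with hlt | hlt
    exacts [⟨q₁, q₂, hlt, heq⟩, ⟨q₂, q₁, hlt, heq.symm⟩]
  have hsim : simRel L α (f a) (f b) := by
    have : f b ∈ scl L α (f b) := simRel_refl α (f b)
    rw [← habeq] at this
    exact this
  obtain ⟨e, he⟩ := ratEmb hab
  refine noRat α (f a) (f b) hsim (e.trans f) ?_
  intro r
  have h1 := he r
  rw [Set.uIcc_of_le (f.le_iff_le.2 hab.le)]
  exact ⟨f.le_iff_le.2 h1.1.le, f.le_iff_le.2 h1.2.le⟩

lemma exists_stab : ∃ α : Ordinal, ∀ x y : L, simRel L (α + 1) x y → simRel L α x y := by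
  by_contra hcon
  push_neg at hcon
  set F : Ordinal → Set (L × L) := fun α => {p | simRel L α p.1 p.2} with hF
  have hmono : ∀ β γ : Ordinal, β ≤ γ → F β ⊆ F γ := fun β γ h p hp => simRel_mono h hp
  have hstrict : ∀ β γ : Ordinal, β < γ → F β ⊂ F γ := by
    intro β γ h
    obtain ⟨x, y, h1, h2⟩ := hcon β
    refine ⟨hmono _ _ h.le, fun hsub => h2 ?_⟩
    have hβ1 : β + 1 ≤ γ := by
      rw [Ordinal.add_one_eq_succ]
      exact Order.succ_le_of_lt h
    exact hsub (hmono _ _ hβ1 (show (x, y) ∈ F (β + 1) from h1))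
  set κ : Cardinal := Cardinal.lift.{u_1} (Cardinal.mk (Set (L × L))) with hκ
  set o : Ordinal := (Order.succ κ).ord with ho
  set G : o.ToType → ULift.{u_1} (Set (L × L)) :=
    fun i => ULift.up (F ((Ordinal.ToType.mk (o := o)).symm i).1) with hG
  have hinj : Function.Injective G := by
    intro i j hij
    by_contra hne
    have hij' := congrArg ULift.down hij
    have hne' : ((Ordinal.ToType.mk (o := o)).symm i).1 ≠ ((Ordinal.ToType.mk (o := o)).symm j).1 := by
      intro hE
      exact hne ((Ordinal.ToType.mk (o := o)).symm.injective (Subtype.ext hE))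
    rcases hne'.lt_or_gt with h | h
    · exact (hstrict _ _ h).ne hij'
    · exact (hstrict _ _ h).ne hij'.symm
  have hcard := Cardinal.mk_le_of_injective hinj
  rw [Cardinal.mk_toType, ho, Cardinal.card_ord, Cardinal.mk_uLift, ← hκ] at hcard
  exact (Order.lt_succ κ).not_ge hcard

lemma finite_of_scattered (hs : ¬ Nonempty (ℚ ↪o L)) :
    ∃ α : Ordinal, (Set.range (scl L α)).Finite := by
  classical
  obtain ⟨α, hα⟩ := exists_stab (L := L)
  refine ⟨α, ?_⟩
  by_contra hfin
  have hinf : (Set.range (scl L α)).Infinite := hfin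
  obtain ⟨A, hA, B, hB, hAB⟩ := hinf.nontrivial
  obtain ⟨x, rfl⟩ := hA
  obtain ⟨y, rfl⟩ := hB
  have hxy : ¬ simRel L α x y := fun h => hAB (class_eq h)
  set r : L → L := fun z => if h : (scl L α z).Nonempty then h.some else x with hr
  have hrmem : ∀ z : L, simRel L α z (r z) := by
    intro z
    have h : (scl L α z).Nonempty := ⟨z, simRel_refl α z⟩
    rw [hr]
    simp only [dif_pos h]
    exact h.some_mem
  have hreq : ∀ z w : L, simRel L α z w → r z = r w := by
    intro z w h
    simp only [hr, class_eq h]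
  set D : Set L := Set.range r with hD
  have hDne : ∀ u v : L, u ∈ D → v ∈ D → simRel L α u v → u = v := by
    rintro _ _ ⟨a, rfl⟩ ⟨b, rfl⟩ h
    have hab : simRel L α a b :=
      simRel_trans α _ _ _ (hrmem a)
        (simRel_trans α _ _ _ h (simRel_symm (hrmem b)))
    rw [hreq a b hab]
  haveI : Nontrivial D := by
    refine ⟨⟨r x, ⟨x, rfl⟩⟩, ⟨r y, ⟨y, rfl⟩⟩, ?_⟩
    simp only [ne_eq, Subtype.mk.injEq]
    intro hE
    replace hE : r x = r y := congrArg Subtype.val hE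
    exact hxy (simRel_trans α _ _ _ (hrmem x)
      (hE ▸ simRel_symm (hrmem y)))
  haveI : DenselyOrdered D := by
    constructor
    rintro ⟨u, hu⟩ ⟨v, hv⟩ h
    rw [Subtype.mk_lt_mk] at h
    have huv : ¬ simRel L α u v := fun hsim => absurd (hDne u v hu hv hsim) h.ne
    have hinfuv : (scl L α '' Set.uIcc u v).Infinite := by
      by_contra hfin'
      rw [Set.not_infinite] at hfin'
      refine huv (hα u v ((simRel_iff (α + 1) u v).2 (Or.inr ⟨α, ?_, hfin'⟩)))
      rw [Ordinal.add_one_eq_succ]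
      exact Order.lt_succ α
    obtain ⟨C, hC⟩ := (hinfuv.diff ((Set.finite_singleton (scl L α u)).insert
      (scl L α v))).nonempty
    obtain ⟨⟨z, hzI, rfl⟩, hCne⟩ := hC
    simp only [Set.mem_insert_iff, Set.mem_singleton_iff, not_or] at hCne
    have hzv : ¬ simRel L α z v := fun hsim => hCne.1 (class_eq hsim)
    have hzu : ¬ simRel L α z u := fun hsim => hCne.2 (class_eq hsim)
    rw [Set.uIcc_of_le h.le] at hzI
    have h1 : u < z := lt_of_le_of_ne hzI.1 (fun e => hzu (e ▸ simRel_refl α z))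
    have h2 : z < v := lt_of_le_of_ne hzI.2 (fun e => hzv (e ▸ simRel_refl α z))
    refine ⟨⟨r z, ⟨z, rfl⟩⟩, ?_, ?_⟩
    · show u < r z
      by_contra hle
      push_neg at hle
      have hmem : u ∈ Set.uIcc (r z) z := by
        rw [Set.uIcc_of_le (hle.trans h1.le)]
        exact ⟨hle, h1.le⟩
      have := simRel_convex (simRel_symm (hrmem z)) hmem
      exact hzu (simRel_trans α _ _ _ (hrmem z) this)
    · show r z < v
      by_contra hle
      push_neg at hle
      have hmem : v ∈ Set.uIcc z (r z) := by
        rw [Set.uIcc_of_le (h2.le.trans hle)]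
        exact ⟨h2.le, hle⟩
      have := simRel_convex (hrmem z) hmem
      exact hzv this
  obtain ⟨E⟩ := Order.embedding_from_countable_to_dense ℚ D
  exact hs ⟨E.trans (OrderEmbedding.subtype _)⟩

end Stmt7Aux

/-- A linear order `L` is scattered (`ℚ` does not embed into `L`) iff its
Hausdorff rank is an ordinal, i.e. `L^(α)` is finite (the relation `∼_α` has
finitely many classes) for some ordinal `α`. -/
theorem stmt_7 (L : Type) [LinearOrder L] :
    (¬ Nonempty (ℚ ↪o L)) ↔
      ∃ α : Ordinal, Set.Finite (Set.range fun z : L => {w | simRel L α z w}) := by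
  constructor
  · exact fun hs => Stmt7Aux.finite_of_scattered hs
  · rintro ⟨α, hα⟩
    exact Stmt7Aux.scattered_of_finite α hα
end

section
/- Let L₁, L₂ be linear orders and L = L₁ + L₂. If either L₁ has no maximum element or L₂ has no minimum element, then the first Hausdorff derivative satisfies L^(1) ≅ L₁^(1) + L₂^(1). If L₁ has a maximum and L₂ has a minimum, then L^(1) is obtained from L₁^(1) + L₂^(1) by identifying the maximum of L₁^(1) with the minimum of L₂^(1). -/
section HausdorffDerivative

variable {M : Type} [LinearOrder M]

/-- `x ∼₁ y` iff the closed interval between `x` and `y` is finite. -/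
def sim1 (x y : M) : Prop := (Set.uIcc x y).Finite

theorem sim1_refl (x : M) : sim1 x x := by simp [sim1]

theorem sim1_symm {x y : M} (h : sim1 x y) : sim1 y x := by
  rwa [sim1, Set.uIcc_comm]

theorem sim1_trans {x y z : M} (h1 : sim1 x y) (h2 : sim1 y z) : sim1 x z :=
  Set.Finite.subset (h1.union h2) (Set.uIcc_subset_uIcc_union_uIcc)

/-- The setoid of `∼₁`-equivalence. -/
def sim1Setoid (M : Type) [LinearOrder M] : Setoid M :=
  ⟨sim1, ⟨sim1_refl, sim1_symm, sim1_trans⟩⟩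

/-- The first Hausdorff derivative `M^(1)`: the linear order of `∼₁`-classes. -/
def HDeriv (M : Type) [LinearOrder M] : Type := Quotient (sim1Setoid M)

theorem sim1_le_congr {x x' y y' : M} (hx : sim1 x x') (hy : sim1 y y')
    (h : x ≤ y ∨ sim1 x y) : x' ≤ y' ∨ sim1 x' y' := by
  by_cases hxy' : sim1 x' y'
  · exact Or.inr hxy'
  rcases h with h | h
  · left
    by_contra hlt
    push_neg at hlt
    apply hxy' (sim1_symm _)
    have hsub : Set.uIcc y' x' ⊆ Set.uIcc y' y ∪ Set.uIcc x x' := by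
      intro z hz
      rw [Set.uIcc_of_le hlt.le, Set.mem_Icc] at hz
      rcases le_or_gt z y with hzy | hzy
      · exact Or.inl (Set.mem_uIcc.2 (Or.inl ⟨hz.1, hzy⟩))
      · exact Or.inr (Set.mem_uIcc.2 (Or.inl ⟨(h.trans hzy.le), hz.2⟩))
    exact Set.Finite.subset ((sim1_symm hy).union hx) hsub
  · exact absurd (sim1_trans (sim1_trans (sim1_symm hx) h) hy) hxy'

/-- The induced order on `∼₁`-classes. -/
def HDeriv.le : HDeriv M → HDeriv M → Prop :=
  Quotient.lift₂ (fun x y => x ≤ y ∨ sim1 x y)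
    (fun _ _ _ _ ha hb => propext
      ⟨sim1_le_congr ha hb, sim1_le_congr (sim1_symm ha) (sim1_symm hb)⟩)

noncomputable instance HDeriv.instLinearOrder : LinearOrder (HDeriv M) where
  le := HDeriv.le
  le_refl := by rintro ⟨x⟩; exact Or.inl le_rfl
  le_trans := by
    rintro ⟨x⟩ ⟨y⟩ ⟨z⟩ (h1 | h1) (h2 | h2)
    · exact Or.inl (h1.trans h2)
    · rcases le_or_gt x z with h | h
      · exact Or.inl h
      · exact Or.inr (sim1_symm (Set.Finite.subset h2
          (by rw [Set.uIcc_of_le h.le, Set.uIcc_of_ge (h.le.trans h1)]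
              exact Set.Icc_subset_Icc le_rfl h1)))
    · rcases le_or_gt x z with h | h
      · exact Or.inl h
      · exact Or.inr (Set.Finite.subset h1
          (by rw [Set.uIcc_of_ge h.le, Set.uIcc_of_ge (h2.trans h.le)]
              exact Set.Icc_subset_Icc h2 le_rfl))
    · exact Or.inr (sim1_trans h1 h2)
  le_antisymm := by
    rintro ⟨x⟩ ⟨y⟩ (h1 | h1) (h2 | h2)
    · exact Quotient.sound (le_antisymm h1 h2 ▸ sim1_refl x)
    · exact Quotient.sound (sim1_symm h2)
    · exact Quotient.sound h1
    · exact Quotient.sound h1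
  le_total := by
    rintro ⟨x⟩ ⟨y⟩
    rcases le_total x y with h | h
    · exact Or.inl (Or.inl h)
    · exact Or.inr (Or.inl h)
  toDecidableLE := Classical.decRel _

end HausdorffDerivative

section AuxLemmas
open Sum

variable {L₁ L₂ : Type} [LinearOrder L₁] [LinearOrder L₂]

/-- `inl` into the lex sum. -/
def lexi1 (x : L₁) : L₁ ⊕ₗ L₂ := toLex (inl x)
/-- `inr` into the lex sum. -/
def lexi2 (y : L₂) : L₁ ⊕ₗ L₂ := toLex (inr y)

theorem lex_cases (z : L₁ ⊕ₗ L₂) : (∃ x, z = lexi1 x) ∨ (∃ y, z = lexi2 y) := by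
  rcases z with z | z
  · exact Or.inl ⟨z, rfl⟩
  · exact Or.inr ⟨z, rfl⟩

theorem i1_le_i1 {x y : L₁} : (lexi1 x : L₁ ⊕ₗ L₂) ≤ lexi1 y ↔ x ≤ y := Sum.Lex.inl_le_inl_iff
theorem i2_le_i2 {x y : L₂} : (lexi2 x : L₁ ⊕ₗ L₂) ≤ lexi2 y ↔ x ≤ y := Sum.Lex.inr_le_inr_iff
theorem i1_le_i2 (x : L₁) (y : L₂) : (lexi1 x : L₁ ⊕ₗ L₂) ≤ lexi2 y := Sum.Lex.inl_le_inr x y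
theorem not_i2_le_i1 (x : L₁) (y : L₂) : ¬ (lexi2 y : L₁ ⊕ₗ L₂) ≤ lexi1 x :=
  Sum.Lex.not_inr_le_inl
theorem i1_inj : Function.Injective (lexi1 : L₁ → L₁ ⊕ₗ L₂) :=
  fun _ _ h => Sum.inl_injective (toLex.injective h)
theorem i2_inj : Function.Injective (lexi2 : L₂ → L₁ ⊕ₗ L₂) :=
  fun _ _ h => Sum.inr_injective (toLex.injective h)
theorem i1_ne_i2 (x : L₁) (y : L₂) : (lexi1 x : L₁ ⊕ₗ L₂) ≠ lexi2 y :=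
  fun h => Sum.inl_ne_inr (toLex.injective h)

theorem icc_i1_i1 {x y : L₁} :
    Set.Icc (lexi1 x : L₁ ⊕ₗ L₂) (lexi1 y) = lexi1 '' Set.Icc x y := by
  ext z
  rcases lex_cases z with ⟨w, rfl⟩ | ⟨w, rfl⟩
  · simp only [Set.mem_Icc, Set.mem_image, i1_le_i1]
    constructor
    · rintro ⟨h1, h2⟩; exact ⟨w, ⟨h1, h2⟩, rfl⟩
    · rintro ⟨v, hv, he⟩; obtain rfl := i1_inj he; exact hv
  · simp only [Set.mem_Icc, Set.mem_image]
    constructor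
    · rintro ⟨h1, h2⟩; exact absurd h2 (not_i2_le_i1 y w)
    · rintro ⟨v, hv, he⟩; exact absurd he (i1_ne_i2 v w)

theorem icc_i2_i2 {x y : L₂} :
    Set.Icc (lexi2 x : L₁ ⊕ₗ L₂) (lexi2 y) = lexi2 '' Set.Icc x y := by
  ext z
  rcases lex_cases z with ⟨w, rfl⟩ | ⟨w, rfl⟩
  · simp only [Set.mem_Icc, Set.mem_image]
    constructor
    · rintro ⟨h1, h2⟩; exact absurd h1 (not_i2_le_i1 w x)
    · rintro ⟨v, hv, he⟩; exact absurd he.symm (i1_ne_i2 w v)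
  · simp only [Set.mem_Icc, Set.mem_image, i2_le_i2]
    constructor
    · rintro ⟨h1, h2⟩; exact ⟨w, ⟨h1, h2⟩, rfl⟩
    · rintro ⟨v, hv, he⟩; obtain rfl := i2_inj he; exact hv

theorem icc_i1_i2 {x : L₁} {y : L₂} :
    Set.Icc (lexi1 x : L₁ ⊕ₗ L₂) (lexi2 y) = lexi1 '' Set.Ici x ∪ lexi2 '' Set.Iic y := by
  ext z
  rcases lex_cases z with ⟨w, rfl⟩ | ⟨w, rfl⟩
  · simp only [Set.mem_Icc, Set.mem_union, Set.mem_image, i1_le_i1]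
    constructor
    · rintro ⟨h1, _⟩; exact Or.inl ⟨w, h1, rfl⟩
    · rintro (⟨v, hv, he⟩ | ⟨v, hv, he⟩)
      · obtain rfl := i1_inj he; exact ⟨hv, i1_le_i2 v y⟩
      · exact absurd he.symm (i1_ne_i2 w v)
  · simp only [Set.mem_Icc, Set.mem_union, Set.mem_image, i2_le_i2]
    constructor
    · rintro ⟨_, h2⟩; exact Or.inr ⟨w, h2, rfl⟩
    · rintro (⟨v, hv, he⟩ | ⟨v, hv, he⟩)
      · exact absurd he (i1_ne_i2 v w)
      · obtain rfl := i2_inj he; exact ⟨i1_le_i2 x v, hv⟩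

theorem sim1_of_le {M : Type} [LinearOrder M] {x y : M} (h : x ≤ y) :
    sim1 x y ↔ (Set.Icc x y).Finite := by
  unfold sim1
  rw [Set.uIcc_of_le h]

theorem sim1_i1_i1 {x y : L₁} : sim1 (lexi1 x : L₁ ⊕ₗ L₂) (lexi1 y) ↔ sim1 x y := by
  rcases le_total x y with h | h
  · rw [sim1_of_le (i1_le_i1.2 h), sim1_of_le h, icc_i1_i1,
      Set.finite_image_iff i1_inj.injOn]
  · rw [show (sim1 (lexi1 x : L₁ ⊕ₗ L₂) (lexi1 y)) = sim1 (lexi1 y : L₁ ⊕ₗ L₂) (lexi1 x) from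
      propext ⟨sim1_symm, sim1_symm⟩,
      show sim1 x y = sim1 y x from propext ⟨sim1_symm, sim1_symm⟩,
      sim1_of_le (i1_le_i1.2 h), sim1_of_le h, icc_i1_i1,
      Set.finite_image_iff i1_inj.injOn]

theorem sim1_i2_i2 {x y : L₂} : sim1 (lexi2 x : L₁ ⊕ₗ L₂) (lexi2 y) ↔ sim1 x y := by
  rcases le_total x y with h | h
  · rw [sim1_of_le (i2_le_i2.2 h), sim1_of_le h, icc_i2_i2,
      Set.finite_image_iff i2_inj.injOn]
  · rw [show (sim1 (lexi2 x : L₁ ⊕ₗ L₂) (lexi2 y)) = sim1 (lexi2 y : L₁ ⊕ₗ L₂) (lexi2 x) from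
      propext ⟨sim1_symm, sim1_symm⟩,
      show sim1 x y = sim1 y x from propext ⟨sim1_symm, sim1_symm⟩,
      sim1_of_le (i2_le_i2.2 h), sim1_of_le h, icc_i2_i2,
      Set.finite_image_iff i2_inj.injOn]

theorem sim1_i1_i2 {x : L₁} {y : L₂} :
    sim1 (lexi1 x : L₁ ⊕ₗ L₂) (lexi2 y) ↔ (Set.Ici x).Finite ∧ (Set.Iic y).Finite := by
  rw [sim1_of_le (i1_le_i2 x y), icc_i1_i2, Set.finite_union,
    Set.finite_image_iff i1_inj.injOn, Set.finite_image_iff i2_inj.injOn]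

theorem fin_Ici_exists_max {L : Type} [LinearOrder L] {x : L} (h : (Set.Ici x).Finite) :
    ∃ a : L, ∀ z, z ≤ a := by
  obtain ⟨a, ha, hmax⟩ := Set.exists_max_image (Set.Ici x) id h ⟨x, le_refl x⟩
  refine ⟨a, fun z => ?_⟩
  rcases le_total z x with hz | hz
  · exact hz.trans ha
  · exact hmax z hz

theorem fin_Iic_exists_min {L : Type} [LinearOrder L] {y : L} (h : (Set.Iic y).Finite) :
    ∃ b : L, ∀ z, b ≤ z := by
  obtain ⟨b, hb, hmin⟩ := Set.exists_min_image (Set.Iic y) id h ⟨y, le_refl y⟩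
  refine ⟨b, fun z => ?_⟩
  rcases le_total y z with hz | hz
  · exact hb.trans hz
  · exact hmin z hz

/-- The quotient map to the Hausdorff derivative. -/
abbrev hmk {M : Type} [LinearOrder M] (x : M) : HDeriv M := Quotient.mk (sim1Setoid M) x

theorem hmk_surj {M : Type} [LinearOrder M] : Function.Surjective (hmk (M := M)) :=
  Quotient.exists_rep

theorem hd_mk_le {M : Type} [LinearOrder M] {x y : M} :
    hmk x ≤ hmk y ↔ (x ≤ y ∨ sim1 x y) := Iff.rfl

theorem hd_mk_eq {M : Type} [LinearOrder M] {x y : M} :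
    hmk x = hmk y ↔ sim1 x y := by
  constructor
  · exact fun h => Quotient.exact h
  · exact fun h => Quotient.sound h

end AuxLemmas

section Cases
open Sum

theorem stmt_case1 (L₁ L₂ : Type) [LinearOrder L₁] [LinearOrder L₂]
    (h : (¬ ∃ a : L₁, ∀ x, x ≤ a) ∨ (¬ ∃ b : L₂, ∀ x, b ≤ x)) :
    Nonempty (HDeriv (L₁ ⊕ₗ L₂) ≃o ((HDeriv L₁) ⊕ₗ (HDeriv L₂))) := by
  have hmix : ∀ (x : L₁) (y : L₂), ¬ sim1 (lexi1 x : L₁ ⊕ₗ L₂) (lexi2 y) := by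
    intro x y hs
    rw [sim1_i1_i2] at hs
    rcases h with h | h
    · exact h (fin_Ici_exists_max hs.1)
    · exact h (fin_Iic_exists_min hs.2)
  set f : (L₁ ⊕ₗ L₂) → (HDeriv L₁) ⊕ₗ (HDeriv L₂) := fun z =>
    toLex (Sum.map hmk hmk (ofLex z)) with hfdef
  have hf1 : ∀ x : L₁, f (lexi1 x) = lexi1 (hmk x) := fun _ => rfl
  have hf2 : ∀ y : L₂, f (lexi2 y) = lexi2 (hmk y) := fun _ => rfl
  have hf : ∀ z w : L₁ ⊕ₗ L₂, sim1 z w → f z = f w := by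
    intro z w hzw
    rcases lex_cases z with ⟨x, rfl⟩ | ⟨x, rfl⟩ <;>
      rcases lex_cases w with ⟨y, rfl⟩ | ⟨y, rfl⟩
    · rw [hf1, hf1]
      exact congrArg lexi1 (hd_mk_eq.2 (sim1_i1_i1.1 hzw))
    · exact absurd hzw (hmix x y)
    · exact absurd (sim1_symm hzw) (hmix y x)
    · rw [hf2, hf2]
      exact congrArg lexi2 (hd_mk_eq.2 (sim1_i2_i2.1 hzw))
  set F : HDeriv (L₁ ⊕ₗ L₂) → (HDeriv L₁) ⊕ₗ (HDeriv L₂) :=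
    Quotient.lift f (fun z w hzw => hf z w hzw) with hFdef
  have hFmk : ∀ z : L₁ ⊕ₗ L₂, F (hmk z) = f z := fun _ => rfl
  have hsurj : Function.Surjective F := by
    intro t
    rcases lex_cases t with ⟨c, rfl⟩ | ⟨c, rfl⟩
    · obtain ⟨x, rfl⟩ := hmk_surj c
      exact ⟨hmk (lexi1 x), (hFmk _).trans (hf1 x)⟩
    · obtain ⟨y, rfl⟩ := hmk_surj c
      exact ⟨hmk (lexi2 y), (hFmk _).trans (hf2 y)⟩
  have hmono : Monotone F := by
    rintro ⟨z⟩ ⟨w⟩ hzw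
    have hzw' : z ≤ w ∨ sim1 z w := hzw
    rcases hzw' with hle | hs
    · show f z ≤ f w
      rcases lex_cases z with ⟨x, rfl⟩ | ⟨x, rfl⟩ <;>
        rcases lex_cases w with ⟨y, rfl⟩ | ⟨y, rfl⟩
      · rw [hf1, hf1]
        exact i1_le_i1.2 (hd_mk_le.2 (Or.inl (i1_le_i1.1 hle)))
      · rw [hf1, hf2]; exact i1_le_i2 _ _
      · exact absurd hle (not_i2_le_i1 y x)
      · rw [hf2, hf2]
        exact i2_le_i2.2 (hd_mk_le.2 (Or.inl (i2_le_i2.1 hle)))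
    · exact le_of_eq (congrArg F (Quotient.sound hs))
  have hinj : Function.Injective F := by
    rintro ⟨z⟩ ⟨w⟩ he
    apply Quotient.sound
    have he' : f z = f w := he
    rcases lex_cases z with ⟨x, rfl⟩ | ⟨x, rfl⟩ <;>
      rcases lex_cases w with ⟨y, rfl⟩ | ⟨y, rfl⟩
    · rw [hf1, hf1] at he'
      exact sim1_i1_i1.2 (hd_mk_eq.1 (i1_inj he'))
    · rw [hf1, hf2] at he'
      exact absurd he' (i1_ne_i2 _ _)
    · rw [hf2, hf1] at he'
      exact absurd he'.symm (i1_ne_i2 _ _)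
    · rw [hf2, hf2] at he'
      exact sim1_i2_i2.2 (hd_mk_eq.1 (i2_inj he'))
  exact ⟨StrictMono.orderIsoOfSurjective F (hmono.strictMono_of_injective hinj) hsurj⟩

end Cases

section Case2
open Sum

theorem stmt_case2 (L₁ L₂ : Type) [LinearOrder L₁] [LinearOrder L₂]
    (a : L₁) (ha : ∀ x, x ≤ a) (b : L₂) (hb : ∀ x, b ≤ x) :
    Nonempty (HDeriv (L₁ ⊕ₗ L₂) ≃o ((HDeriv L₁) ⊕ₗ {y : HDeriv L₂ // ¬ IsMin y})) := by
  classical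
  have hIci : ∀ x : L₁, sim1 x a ↔ (Set.Ici x).Finite := by
    intro x
    rw [sim1_of_le (ha x)]
    constructor
    · intro h; exact h.subset (fun z hz => Set.mem_Icc.2 ⟨hz, ha z⟩)
    · intro h; exact h.subset (fun z hz => (Set.mem_Icc.1 hz).1)
  have hIic : ∀ y : L₂, sim1 b y ↔ (Set.Iic y).Finite := by
    intro y
    rw [sim1_of_le (hb y)]
    constructor
    · intro h; exact h.subset (fun z hz => Set.mem_Icc.2 ⟨hb z, Set.mem_Iic.1 hz⟩)
    · intro h; exact h.subset (fun z hz => Set.mem_Iic.2 (Set.mem_Icc.1 hz).2)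
  have hminb : IsMin (hmk b : HDeriv L₂) := by
    rintro ⟨w⟩ _
    exact Or.inl (hb w)
  have hbmin : ∀ y : L₂, ¬ sim1 b y → ¬ IsMin (hmk y : HDeriv L₂) := by
    intro y hy hmin
    have h1 : (hmk y : HDeriv L₂) ≤ hmk b := hmin (hd_mk_le.2 (Or.inl (hb y)))
    rcases hd_mk_le.1 h1 with h2 | h2
    · obtain rfl : y = b := le_antisymm h2 (hb y)
      exact hy (sim1_refl y)
    · exact hy (sim1_symm h2)
  set f : (L₁ ⊕ₗ L₂) → (HDeriv L₁) ⊕ₗ {y : HDeriv L₂ // ¬ IsMin y} := fun z =>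
    Sum.rec (fun x => lexi1 (hmk x))
      (fun y => if h : sim1 b y then lexi1 (hmk a) else lexi2 ⟨hmk y, hbmin y h⟩)
      (ofLex z) with hfdef
  have hf1 : ∀ x : L₁, f (lexi1 x) = lexi1 (hmk x) := fun _ => rfl
  have hf2 : ∀ y : L₂, f (lexi2 y) =
      (if h : sim1 b y then lexi1 (hmk a) else lexi2 ⟨hmk y, hbmin y h⟩) := fun _ => rfl
  have hf2p : ∀ y : L₂, sim1 b y → f (lexi2 y) = lexi1 (hmk a) := by
    intro y hy; rw [hf2, dif_pos hy]
  have hf2n : ∀ (y : L₂) (hy : ¬ sim1 b y), f (lexi2 y) = lexi2 ⟨hmk y, hbmin y hy⟩ := by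
    intro y hy; rw [hf2, dif_neg hy]
  have hsim_i1_i2 : ∀ (x : L₁) (y : L₂),
      sim1 (lexi1 x : L₁ ⊕ₗ L₂) (lexi2 y) ↔ sim1 x a ∧ sim1 b y := by
    intro x y; rw [sim1_i1_i2, hIci, hIic]
  have hf : ∀ z w : L₁ ⊕ₗ L₂, sim1 z w → f z = f w := by
    intro z w hzw
    rcases lex_cases z with ⟨x, rfl⟩ | ⟨x, rfl⟩ <;>
      rcases lex_cases w with ⟨y, rfl⟩ | ⟨y, rfl⟩
    · rw [hf1, hf1]; exact congrArg lexi1 (hd_mk_eq.2 (sim1_i1_i1.1 hzw))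
    · obtain ⟨hxa, hby⟩ := (hsim_i1_i2 x y).1 hzw
      rw [hf1, hf2p y hby]
      exact congrArg lexi1 (hd_mk_eq.2 hxa)
    · obtain ⟨hya, hbx⟩ := (hsim_i1_i2 y x).1 (sim1_symm hzw)
      rw [hf1, hf2p x hbx]
      exact (congrArg lexi1 (hd_mk_eq.2 hya)).symm
    · have hyy : sim1 x y := sim1_i2_i2.1 hzw
      by_cases hbx : sim1 b x
      · rw [hf2p x hbx, hf2p y (sim1_trans hbx hyy)]
      · have hby : ¬ sim1 b y := fun h => hbx (sim1_trans h (sim1_symm hyy))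
        rw [hf2n x hbx, hf2n y hby]
        exact congrArg lexi2 (Subtype.ext (hd_mk_eq.2 hyy))
  set F : HDeriv (L₁ ⊕ₗ L₂) → (HDeriv L₁) ⊕ₗ {y : HDeriv L₂ // ¬ IsMin y} :=
    Quotient.lift f (fun z w hzw => hf z w hzw) with hFdef
  have hFmk : ∀ z : L₁ ⊕ₗ L₂, F (hmk z) = f z := fun _ => rfl
  have hsurj : Function.Surjective F := by
    intro t
    rcases lex_cases t with ⟨c, rfl⟩ | ⟨c, rfl⟩
    · obtain ⟨x, rfl⟩ := hmk_surj c
      exact ⟨hmk (lexi1 x), (hFmk _).trans (hf1 x)⟩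
    · obtain ⟨d, hd⟩ := c
      obtain ⟨y, rfl⟩ := hmk_surj d
      have hby : ¬ sim1 b y := by
        intro h
        have he : hmk y = hmk b := hd_mk_eq.2 (sim1_symm h)
        exact hd (by rw [he]; exact hminb)
      refine ⟨hmk (lexi2 y), ?_⟩
      rw [hFmk, hf2n y hby]
  have hmono : Monotone F := by
    rintro ⟨z⟩ ⟨w⟩ hzw
    have hzw' : z ≤ w ∨ sim1 z w := hzw
    rcases hzw' with hle | hs
    · show f z ≤ f w
      rcases lex_cases z with ⟨x, rfl⟩ | ⟨x, rfl⟩ <;>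
        rcases lex_cases w with ⟨y, rfl⟩ | ⟨y, rfl⟩
      · rw [hf1, hf1]; exact i1_le_i1.2 (Or.inl (i1_le_i1.1 hle))
      · rw [hf1]
        by_cases hby : sim1 b y
        · rw [hf2p y hby]; exact i1_le_i1.2 (Or.inl (ha x))
        · rw [hf2n y hby]; exact i1_le_i2 _ _
      · exact absurd hle (not_i2_le_i1 y x)
      · have hxy : x ≤ y := i2_le_i2.1 hle
        by_cases hby : sim1 b y
        · have hbx : sim1 b x := (hIic x).2
            (((hIic y).1 hby).subset (fun z hz => le_trans hz hxy))
          rw [hf2p x hbx, hf2p y hby]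
        · by_cases hbx : sim1 b x
          · rw [hf2p x hbx, hf2n y hby]; exact i1_le_i2 _ _
          · rw [hf2n x hbx, hf2n y hby]
            exact i2_le_i2.2 (Subtype.mk_le_mk.2 (Or.inl hxy))
    · exact le_of_eq (congrArg F (Quotient.sound hs))
  have hinj : Function.Injective F := by
    rintro ⟨z⟩ ⟨w⟩ he
    apply Quotient.sound
    have he' : f z = f w := he
    rcases lex_cases z with ⟨x, rfl⟩ | ⟨x, rfl⟩ <;>
      rcases lex_cases w with ⟨y, rfl⟩ | ⟨y, rfl⟩
    · rw [hf1, hf1] at he'; exact sim1_i1_i1.2 (hd_mk_eq.1 (i1_inj he'))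
    · by_cases hby : sim1 b y
      · rw [hf1, hf2p y hby] at he'
        exact (hsim_i1_i2 x y).2 ⟨hd_mk_eq.1 (i1_inj he'), hby⟩
      · rw [hf1, hf2n y hby] at he'; exact absurd he' (i1_ne_i2 _ _)
    · by_cases hbx : sim1 b x
      · rw [hf2p x hbx, hf1] at he'
        exact sim1_symm ((hsim_i1_i2 y x).2 ⟨hd_mk_eq.1 (i1_inj he'.symm), hbx⟩)
      · rw [hf2n x hbx, hf1] at he'; exact absurd he'.symm (i1_ne_i2 _ _)
    · by_cases hbx : sim1 b x <;> by_cases hby : sim1 b y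
      · exact sim1_i2_i2.2 (sim1_trans (sim1_symm hbx) hby)
      · rw [hf2p x hbx, hf2n y hby] at he'; exact absurd he' (i1_ne_i2 _ _)
      · rw [hf2n x hbx, hf2p y hby] at he'; exact absurd he'.symm (i1_ne_i2 _ _)
      · rw [hf2n x hbx, hf2n y hby] at he'
        exact sim1_i2_i2.2 (hd_mk_eq.1 (congrArg Subtype.val (i2_inj he')))
  exact ⟨StrictMono.orderIsoOfSurjective F (hmono.strictMono_of_injective hinj) hsurj⟩

end Case2

/-- First Hausdorff derivative of an ordered sum: if `L₁` has no maximum or `L₂`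
has no minimum then `(L₁ + L₂)^(1) ≅ L₁^(1) + L₂^(1)`; if `L₁` has a maximum and
`L₂` has a minimum, then `(L₁ + L₂)^(1)` is `L₁^(1) + L₂^(1)` with the maximum of
`L₁^(1)` identified with the minimum of `L₂^(1)` (i.e. it is `L₁^(1)` followed by
the non-minimal part of `L₂^(1)`). -/
theorem stmt_8 (L₁ L₂ : Type) [LinearOrder L₁] [LinearOrder L₂] :
    (((¬ ∃ a : L₁, ∀ x, x ≤ a) ∨ (¬ ∃ b : L₂, ∀ x, b ≤ x)) →
      Nonempty (HDeriv (L₁ ⊕ₗ L₂) ≃o ((HDeriv L₁) ⊕ₗ (HDeriv L₂)))) ∧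
    ((∃ a : L₁, ∀ x, x ≤ a) → (∃ b : L₂, ∀ x, b ≤ x) →
      Nonempty (HDeriv (L₁ ⊕ₗ L₂) ≃o ((HDeriv L₁) ⊕ₗ {y : HDeriv L₂ // ¬ IsMin y}))) := by
  constructor
  · exact stmt_case1 L₁ L₂
  · rintro ⟨a, ha⟩ ⟨b, hb⟩
    exact stmt_case2 L₁ L₂ a ha b hb
end

section
/- Any suffix of an ω-sum of finitely presented linear orders is an ω-sum: if L, L', L̃ are finitely presented linear orders with L' = L + L̃, L̃ nonempty, and L' ≅ ω ×ₗ M for some M, then there exists a finitely presented linear order L̄ such that L' ≅ ω ×ₗ (L + L̄) and L̃ ≅ ω ×ₗ (L̄ + L). -/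
/-- The class of finitely presented linear orders: the smallest
isomorphism-closed class containing `0` and `1` and closed under binary ordered
sums and the operations `L ↦ ω ×ₗ L` and `L ↦ ω* ×ₗ L`
(here `ℕ ×ₗ A = ∑_{n∈ω} A` and `ℕᵒᵈ ×ₗ A = ∑_{n∈ω*} A`). -/
inductive IsFP : (L : Type) → [_inst : LinearOrder L] → Prop where
  | zero : IsFP (Fin 0)
  | one : IsFP (Fin 1)
  | iso {A B : Type} [LinearOrder A] [LinearOrder B] :
      IsFP A → Nonempty (A ≃o B) → IsFP B
  | sum {A B : Type} [LinearOrder A] [LinearOrder B] :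
      IsFP A → IsFP B → IsFP (A ⊕ₗ B)
  | omega {A : Type} [LinearOrder A] : IsFP A → IsFP (ℕ ×ₗ A)
  | omegaStar {A : Type} [LinearOrder A] : IsFP A → IsFP (ℕᵒᵈ ×ₗ A)


open Sum Set OrderDual

section AuxIso
variable {A B C D : Type} [LinearOrder A] [LinearOrder B] [LinearOrder C] [LinearOrder D]

noncomputable def sumLexCongrIso (e : A ≃o C) (g : B ≃o D) : (A ⊕ₗ B) ≃o (C ⊕ₗ D) := by
  refine StrictMono.orderIsoOfSurjective
    (fun x => Sum.elim (fun a => toLex (inl (e a))) (fun b => toLex (inr (g b))) (ofLex x)) ?_ ?_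
  · intro x y h
    rcases x with a | b <;> rcases y with a' | b'
    · exact Sum.Lex.inl (e.lt_iff_lt.2 (Sum.lex_inl_inl.mp h))
    · exact Sum.Lex.sep _ _
    · exact absurd h (by exact Sum.lex_inr_inl)
    · exact Sum.Lex.inr (g.lt_iff_lt.2 (Sum.lex_inr_inr.mp h))
  · rintro (c | d)
    · refine ⟨toLex (inl (e.symm c)), ?_⟩
      show toLex (inl (e (e.symm c))) = toLex (inl c)
      rw [e.apply_symm_apply]
    · refine ⟨toLex (inr (g.symm d)), ?_⟩
      show toLex (inr (g (g.symm d))) = toLex (inr d)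
      rw [g.apply_symm_apply]

def emptyOrderIso (A B : Type) [LinearOrder A] [LinearOrder B] [IsEmpty A] [IsEmpty B] : A ≃o B :=
  ⟨Equiv.equivOfIsEmpty A B, fun {a} => isEmptyElim a⟩

def preimIso (e : A ≃o B) (s : Set B) : ↥(e ⁻¹' s) ≃o ↥s :=
  ⟨e.toEquiv.subtypeEquiv (fun _ => Iff.rfl), fun {_ _} => e.le_iff_le⟩

noncomputable def subSumIso (s : Set (A ⊕ₗ B)) :
    ((↥{a : A | toLex (inl a) ∈ s}) ⊕ₗ (↥{b : B | toLex (inr b) ∈ s})) ≃o ↥s := by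
  refine StrictMono.orderIsoOfSurjective
    (fun x => Sum.elim (fun a : {a : A | toLex (inl a) ∈ s} => (⟨toLex (inl a.1), a.2⟩ : ↥s))
      (fun b : {b : B | toLex (inr b) ∈ s} => (⟨toLex (inr b.1), b.2⟩ : ↥s)) (ofLex x)) ?_ ?_
  · intro x y h
    rcases x with a | b <;> rcases y with a' | b'
    · exact Sum.Lex.inl (Subtype.coe_lt_coe.2 (Sum.lex_inl_inl.mp h))
    · exact Sum.Lex.sep _ _
    · exact absurd h (by exact Sum.lex_inr_inl)
    · exact Sum.Lex.inr (Subtype.coe_lt_coe.2 (Sum.lex_inr_inr.mp h))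
  · rintro ⟨x, hx⟩
    rcases x with a | b
    · exact ⟨toLex (inl ⟨a, hx⟩), rfl⟩
    · exact ⟨toLex (inr ⟨b, hx⟩), rfl⟩

noncomputable def finSuccProdIso (k : ℕ) : (A ⊕ₗ (Fin k ×ₗ A)) ≃o (Fin (k+1) ×ₗ A) := by
  refine StrictMono.orderIsoOfSurjective
    (fun x => Sum.elim (fun a : A => toLex ((0 : Fin (k+1)), a))
      (fun p : Fin k ×ₗ A => toLex ((ofLex p).1.succ, (ofLex p).2)) (ofLex x)) ?_ ?_
  · intro x y h
    rcases x with a | p <;> rcases y with a' | p'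
    · exact Prod.Lex.right _ (Sum.lex_inl_inl.mp h)
    · exact Prod.Lex.left _ _ (Fin.succ_pos _)
    · exact absurd h (by exact Sum.lex_inr_inl)
    · rcases Prod.Lex.toLex_lt_toLex |>.mp (Sum.lex_inr_inr.mp h) with h1 | ⟨h1, h2⟩
      · exact Prod.Lex.left _ _ (Fin.succ_lt_succ_iff.mpr h1)
      · exact (Prod.Lex.toLex_lt_toLex).mpr (Or.inr ⟨congrArg Fin.succ h1, h2⟩)
  · intro x
    rcases hx : ofLex x with ⟨j, a⟩
    have : x = toLex (j, a) := by rw [← hx]; rfl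
    subst this
    induction j using Fin.cases with
    | zero => exact ⟨toLex (inl a), rfl⟩
    | succ i => exact ⟨toLex (inr (toLex (i, a))), rfl⟩

omit [LinearOrder A] in
theorem isEmpty_finZeroProd : IsEmpty (Fin 0 ×ₗ A) := ⟨fun x => (ofLex x).1.elim0⟩

theorem isFP_finProd (hA : IsFP A) : ∀ k : ℕ, IsFP (Fin k ×ₗ A)
  | 0 => by
    haveI := isEmpty_finZeroProd (A := A)
    exact IsFP.iso IsFP.zero ⟨emptyOrderIso _ _⟩
  | (k+1) => IsFP.iso (IsFP.sum hA (isFP_finProd hA k)) ⟨finSuccProdIso k⟩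

noncomputable def omegaDecompIso (s : Set (ℕ ×ₗ A)) (n₀ : ℕ)
    (hlt : ∀ (i : ℕ) (a : A), i < n₀ → toLex (i, a) ∈ s)
    (hle : ∀ x ∈ s, (ofLex x).1 ≤ n₀) :
    ((Fin n₀ ×ₗ A) ⊕ₗ ↥{a : A | toLex (n₀, a) ∈ s}) ≃o ↥s := by
  refine StrictMono.orderIsoOfSurjective
    (fun x => Sum.elim
      (fun p : Fin n₀ ×ₗ A => (⟨toLex ((ofLex p).1.1, (ofLex p).2), hlt _ _ (ofLex p).1.2⟩ : ↥s))
      (fun b : {a : A | toLex (n₀, a) ∈ s} => (⟨toLex (n₀, b.1), b.2⟩ : ↥s)) (ofLex x)) ?_ ?_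
  · intro x y h
    rcases x with p | b <;> rcases y with p' | b'
    · rcases (Prod.Lex.toLex_lt_toLex).mp (Sum.lex_inl_inl.mp h) with h1 | ⟨h1, h2⟩
      · exact Prod.Lex.left _ _ (by exact_mod_cast h1)
      · exact (Prod.Lex.toLex_lt_toLex).mpr (Or.inr ⟨congrArg Fin.val h1, h2⟩)
    · exact Prod.Lex.left _ _ (ofLex p).1.2
    · exact absurd h (by exact Sum.lex_inr_inl)
    · exact Prod.Lex.right _ (Subtype.coe_lt_coe.2 (Sum.lex_inr_inr.mp h))
  · rintro ⟨x, hx⟩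
    rcases hx' : ofLex x with ⟨n, a⟩
    have hxe : x = toLex (n, a) := by rw [← hx']; rfl
    subst hxe
    rcases lt_or_eq_of_le (hle _ hx) with hn | hn
    · exact ⟨toLex (inl (toLex ((⟨n, by simpa using hn⟩ : Fin n₀), a))), rfl⟩
    · refine ⟨toLex (inr ⟨a, by rwa [← show (ofLex (toLex (n,a))).1 = n from rfl, hn] at hx⟩), ?_⟩
      simp only [Sum.elim_inr, ofLex_toLex]
      exact Subtype.ext (by simp [← hn])

noncomputable def omegaStarDecompIso (s : Set (ℕᵒᵈ ×ₗ A)) (k : ℕ)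
    (hmem : ∀ (n : ℕ) (a : A), k < n → toLex (toDual n, a) ∈ s) :
    ((ℕᵒᵈ ×ₗ A) ⊕ₗ ↥{a : A | toLex (toDual k, a) ∈ s}) ≃o
      ↥{x : ℕᵒᵈ ×ₗ A | x ∈ s ∧ k ≤ ofDual (ofLex x).1} := by
  refine StrictMono.orderIsoOfSurjective
    (fun x => Sum.elim
      (fun p : ℕᵒᵈ ×ₗ A =>
        (⟨toLex (toDual (ofDual (ofLex p).1 + k + 1), (ofLex p).2),
          ⟨hmem _ _ (by omega), by simp only [ofLex_toLex, ofDual_toDual]; omega⟩⟩ :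
            ↥{x : ℕᵒᵈ ×ₗ A | x ∈ s ∧ k ≤ ofDual (ofLex x).1}))
      (fun b : {a : A | toLex (toDual k, a) ∈ s} =>
        (⟨toLex (toDual k, b.1), ⟨b.2, le_refl k⟩⟩ :
          ↥{x : ℕᵒᵈ ×ₗ A | x ∈ s ∧ k ≤ ofDual (ofLex x).1})) (ofLex x)) ?_ ?_
  · intro x y h
    rcases x with p | b <;> rcases y with p' | b'
    · rcases (Prod.Lex.toLex_lt_toLex).mp (Sum.lex_inl_inl.mp h) with h1 | ⟨h1, h2⟩
      · refine Prod.Lex.left _ _ ?_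
        have : ofDual (ofLex p').1 < ofDual (ofLex p).1 := h1
        exact toDual_lt_toDual.mpr (by omega)
      · exact (Prod.Lex.toLex_lt_toLex).mpr
          (Or.inr ⟨congrArg (fun n : ℕᵒᵈ => toDual (ofDual n + k + 1)) h1, h2⟩)
    · refine Prod.Lex.left _ _ (toDual_lt_toDual.mpr (by omega))
    · exact absurd h (by exact Sum.lex_inr_inl)
    · exact Prod.Lex.right _ (Subtype.coe_lt_coe.2 (Sum.lex_inr_inr.mp h))
  · rintro ⟨x, hx, hk⟩
    rcases lt_or_eq_of_le hk with hn | hn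
    · refine ⟨toLex (inl (toLex (toDual (ofDual (ofLex x).1 - k - 1), (ofLex x).2))), ?_⟩
      simp only [Sum.elim_inl, ofLex_toLex]
      refine Subtype.ext ?_
      show toLex (toDual (ofDual (ofLex x).1 - k - 1 + k + 1), (ofLex x).2) = x
      have he : ofDual (ofLex x).1 - k - 1 + k + 1 = ofDual (ofLex x).1 := by omega
      rw [he]
      rfl
    · refine ⟨toLex (inr ⟨(ofLex x).2,
        by rw [show toDual k = (ofLex x).1 from toDual_inj.mpr hn]; exact hx⟩), ?_⟩
      simp only [Sum.elim_inr, ofLex_toLex]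
      refine Subtype.ext ?_
      show toLex (toDual k, (ofLex x).2) = x
      rw [show toDual k = (ofLex x).1 from toDual_inj.mpr hn]
      rfl

end AuxIso

theorem isFP_lowerSet : ∀ {A : Type} [inst : LinearOrder A], IsFP A →
    ∀ s : Set A, IsLowerSet s → IsFP ↥s := by
  intro A inst h
  induction h with
  | zero =>
    intro s _
    haveI : IsEmpty ↥s := ⟨fun x => x.1.elim0⟩
    exact IsFP.iso IsFP.zero ⟨emptyOrderIso _ _⟩
  | one =>
    intro s _
    rcases Set.eq_empty_or_nonempty s with he | ⟨x₀, hx₀⟩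
    · haveI : IsEmpty ↥s := by rw [he]; exact Set.instIsEmptyElemEmptyCollection _
      exact IsFP.iso IsFP.zero ⟨emptyOrderIso _ _⟩
    · have hu : s = Set.univ := Set.eq_univ_of_forall fun x => by
        rwa [Subsingleton.elim x x₀]
      exact IsFP.iso IsFP.one ⟨((OrderIso.setCongr s Set.univ hu).trans OrderIso.Set.univ).symm⟩
  | iso hA hne ih =>
    intro s hs
    obtain ⟨e⟩ := hne
    exact IsFP.iso (ih (e ⁻¹' s) (hs.preimage e.monotone)) ⟨preimIso e s⟩
  | sum hA hB ihA ihB =>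
    intro s hs
    have hsA : IsLowerSet {a | toLex (inl a) ∈ s} := fun a a' hle ha =>
      hs (Sum.Lex.inl_le_inl_iff.mpr hle) ha
    have hsB : IsLowerSet {b | toLex (inr b) ∈ s} := fun b b' hle hb =>
      hs (Sum.Lex.inr_le_inr_iff.mpr hle) hb
    exact IsFP.iso (IsFP.sum (ihA _ hsA) (ihB _ hsB)) ⟨subSumIso s⟩
  | @omega A _ hA ih =>
    intro s hs
    by_cases hu : s = Set.univ
    · subst hu
      exact IsFP.iso (IsFP.omega hA) ⟨OrderIso.Set.univ.symm⟩
    · have hbad : {n : ℕ | ∃ a : A, toLex (n, a) ∉ s}.Nonempty := by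
        rcases (Set.ne_univ_iff_exists_notMem s).mp hu with ⟨x, hx⟩
        exact ⟨(ofLex x).1, (ofLex x).2, hx⟩
      set n₀ := sInf {n : ℕ | ∃ a : A, toLex (n, a) ∉ s} with hn₀
      obtain ⟨a₀, ha₀⟩ := Nat.sInf_mem hbad
      have hlt : ∀ (i : ℕ) (a : A), i < n₀ → toLex (i, a) ∈ s := by
        intro i a hi
        by_contra hcon
        have hmem' : i ∈ {n : ℕ | ∃ a : A, toLex (n, a) ∉ s} := ⟨a, hcon⟩
        have := Nat.sInf_le hmem'
        omega
      have hle : ∀ x ∈ s, (ofLex x).1 ≤ n₀ := by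
        intro x hx
        by_contra hcon
        have hx' : toLex (n₀, a₀) < toLex ((ofLex x).1, (ofLex x).2) :=
          Prod.Lex.left _ _ (by omega)
        exact ha₀ (hs (le_of_lt hx') hx)
      have hs₀ : IsLowerSet {a : A | toLex (n₀, a) ∈ s} := fun a a' hle' ha =>
        hs ((Prod.Lex.toLex_le_toLex (x := (n₀, a')) (y := (n₀, a))).mpr (Or.inr ⟨rfl, hle'⟩)) ha
      exact IsFP.iso (IsFP.sum (isFP_finProd hA n₀) (ih _ hs₀)) ⟨omegaDecompIso s n₀ hlt hle⟩
  | @omegaStar A _ hA ih =>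
    intro s hs
    rcases Set.eq_empty_or_nonempty s with he | ⟨x₀, hx₀⟩
    · haveI : IsEmpty ↥s := by rw [he]; exact Set.instIsEmptyElemEmptyCollection _
      exact IsFP.iso IsFP.zero ⟨emptyOrderIso _ _⟩
    · have hocc : {n : ℕ | ∃ a : A, toLex (toDual n, a) ∈ s}.Nonempty :=
        ⟨ofDual (ofLex x₀).1, (ofLex x₀).2, hx₀⟩
      set k := sInf {n : ℕ | ∃ a : A, toLex (toDual n, a) ∈ s} with hk
      obtain ⟨a₀, ha₀⟩ := Nat.sInf_mem hocc
      have hmem : ∀ (n : ℕ) (a : A), k < n → toLex (toDual n, a) ∈ s := by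
        intro n a hn
        exact hs (le_of_lt (Prod.Lex.left _ _ (toDual_lt_toDual.mpr hn))) ha₀
      have hge : ∀ x ∈ s, k ≤ ofDual (ofLex x).1 := fun x hx =>
        Nat.sInf_le ⟨(ofLex x).2, hx⟩
      have hs₀ : IsLowerSet {a : A | toLex (toDual k, a) ∈ s} := fun a a' hle' ha =>
        hs ((Prod.Lex.toLex_le_toLex (x := (toDual k, a')) (y := (toDual k, a))).mpr (Or.inr ⟨rfl, hle'⟩)) ha
      have hseq : {x : ℕᵒᵈ ×ₗ A | x ∈ s ∧ k ≤ ofDual (ofLex x).1} = s := by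
        ext x
        exact ⟨fun hx => hx.1, fun hx => ⟨hx, hge x hx⟩⟩
      exact IsFP.iso (IsFP.sum (IsFP.omegaStar hA) (ih _ hs₀))
        ⟨(omegaStarDecompIso s k hmem).trans (OrderIso.setCongr _ _ hseq)⟩



noncomputable def regroupIso (C D : Type) [LinearOrder C] [LinearOrder D] :
    (C ⊕ₗ (ℕ ×ₗ (D ⊕ₗ C))) ≃o (ℕ ×ₗ (C ⊕ₗ D)) := by
  refine StrictMono.orderIsoOfSurjective
    (fun x => Sum.elim (fun c : C => toLex ((0:ℕ), toLex (inl c)))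
      (fun p : ℕ ×ₗ (D ⊕ₗ C) =>
        Sum.elim (fun d : D => toLex ((ofLex p).1, toLex (inr d)))
          (fun c : C => toLex ((ofLex p).1 + 1, toLex (inl c))) (ofLex (ofLex p).2))
      (ofLex x)) ?_ ?_
  · intro x y h
    rcases x with c | ⟨n, w⟩ <;> rcases y with c' | ⟨n', w'⟩
    · exact Prod.Lex.right _ (Sum.Lex.inl (Sum.lex_inl_inl.mp h))
    · rcases w' with d' | c'
      · rcases Nat.eq_zero_or_pos n' with h0 | h0
        · subst h0; exact Prod.Lex.right _ (Sum.Lex.sep _ _)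
        · exact Prod.Lex.left _ _ h0
      · exact Prod.Lex.left _ _ (by omega)
    · exact absurd h (by exact Sum.lex_inr_inl)
    · have h' := Sum.lex_inr_inr.mp h
      rcases (Prod.Lex.toLex_lt_toLex).mp h' with h1 | ⟨h1, h2⟩
      · simp only at h1
        rcases w with d | c <;> rcases w' with d' | c'
        · exact Prod.Lex.left _ _ h1
        · exact Prod.Lex.left _ _ (Nat.lt_succ_of_lt h1)
        · rcases Nat.lt_or_ge (n+1) n' with hh | hh
          · exact Prod.Lex.left _ _ hh
          · have : n + 1 = n' := by omega
            subst this
            exact Prod.Lex.right _ (Sum.Lex.sep _ _)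
        · exact Prod.Lex.left _ _ (Nat.succ_lt_succ h1)
      · simp only at h1
        subst h1
        rcases w with d | c <;> rcases w' with d' | c'
        · exact Prod.Lex.right _ (Sum.Lex.inr (Sum.lex_inl_inl.mp h2))
        · exact Prod.Lex.left _ _ (Nat.lt_succ_self n)
        · exact absurd h2 (by exact Sum.lex_inr_inl)
        · exact Prod.Lex.right _ (Sum.Lex.inl (Sum.lex_inr_inr.mp h2))
  · intro z
    rcases z with ⟨n, w⟩
    rcases w with c | d
    · rcases n with _ | m
      · exact ⟨toLex (inl c), rfl⟩
      · exact ⟨toLex (inr (toLex (m, toLex (inr c)))), rfl⟩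
    · exact ⟨toLex (inr (toLex (n, toLex (inl d)))), rfl⟩


theorem main_aux {L Lt M : Type} [LinearOrder L] [LinearOrder Lt] [LinearOrder M]
    (t₀ : Lt) (f : (L ⊕ₗ Lt) ≃o ℕ ×ₗ M) :
    ∃ (S : Set M) (n₀ : ℕ),
      (∀ t : Lt, n₀ ≤ (ofLex (f (toLex (inr t)))).1) ∧
      (∀ (n : ℕ) (m : M), n₀ < n → ∃ t, f (toLex (inr t)) = toLex (n, m)) ∧
      (∀ l : L, (ofLex (f (toLex (inl l)))).1 ≤ n₀ ∧
        ((ofLex (f (toLex (inl l)))).1 = n₀ → (ofLex (f (toLex (inl l)))).2 ∉ S)) ∧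
      (∀ m m' : M, m ∉ S → m' ∈ S → m < m') ∧
      S = {m : M | ∃ t : Lt, f (toLex (inr t)) = toLex (n₀, m)} ∧
      (∃ t₁ : Lt, (ofLex (f (toLex (inr t₁)))).1 = n₀) := by
  have key : ∀ (t : Lt) (z : L ⊕ₗ Lt), toLex (inr t) ≤ z → ∃ t', z = toLex (inr t') := by
    intro t z hz
    rcases z with l | t'
    · exact absurd hz (by exact Sum.Lex.not_inr_le_inl)
    · exact ⟨t', rfl⟩
  have hocc : {n : ℕ | ∃ t : Lt, (ofLex (f (toLex (inr t)))).1 = n}.Nonempty :=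
    ⟨(ofLex (f (toLex (inr t₀)))).1, t₀, rfl⟩
  set n₀ := sInf {n : ℕ | ∃ t : Lt, (ofLex (f (toLex (inr t)))).1 = n} with hn₀
  obtain ⟨t₁, ht₁⟩ := Nat.sInf_mem hocc
  set S := {m : M | ∃ t : Lt, f (toLex (inr t)) = toLex (n₀, m)} with hS
  have K0 : ∀ t : Lt, n₀ ≤ (ofLex (f (toLex (inr t)))).1 := fun t => Nat.sInf_le ⟨t, rfl⟩
  have K2 : ∀ (n : ℕ) (m : M), n₀ < n → ∃ t, f (toLex (inr t)) = toLex (n, m) := by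
    intro n m hn
    have hlt : f (toLex (inr t₁)) < toLex (n, m) := by
      have : toLex ((ofLex (f (toLex (inr t₁)))).1, (ofLex (f (toLex (inr t₁)))).2)
          < toLex (n, m) := Prod.Lex.left _ _ (by omega)
      exact this
    obtain ⟨t', ht'⟩ := key t₁ (f.symm (toLex (n, m))) (by
      rw [← f.symm_apply_apply (toLex (inr t₁))]
      exact f.symm.monotone (le_of_lt hlt))
    exact ⟨t', by rw [← f.apply_symm_apply (toLex (n, m)), ht']⟩
  have K4 : ∀ l : L, (ofLex (f (toLex (inl l)))).1 ≤ n₀ ∧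
      ((ofLex (f (toLex (inl l)))).1 = n₀ → (ofLex (f (toLex (inl l)))).2 ∉ S) := by
    intro l
    constructor
    · by_contra hcon
      obtain ⟨t, ht⟩ := K2 (ofLex (f (toLex (inl l)))).1 (ofLex (f (toLex (inl l)))).2 (by omega)
      have : f (toLex (inr t)) = f (toLex (inl l)) := ht
      have := f.injective this
      simp only [EmbeddingLike.apply_eq_iff_eq] at this
      exact absurd this (by simp)
    · intro h1 ⟨t, ht⟩
      have : f (toLex (inr t)) = f (toLex (inl l)) := by
        rw [ht, ← h1]
        rfl
      have := f.injective this
      exact absurd this (by simp)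
  have K5 : ∀ m m' : M, m ∉ S → m' ∈ S → m < m' := by
    intro m m' hm hm'
    by_contra hcon
    push_neg at hcon
    obtain ⟨t', ht'⟩ := hm'
    have hle : toLex ((n₀ : ℕ), m') ≤ toLex (n₀, m) :=
      (Prod.Lex.toLex_le_toLex).mpr (Or.inr ⟨rfl, hcon⟩)
    obtain ⟨t'', ht''⟩ := key t' (f.symm (toLex (n₀, m))) (by
      rw [← f.symm_apply_apply (toLex (inr t'))]
      exact f.symm.monotone (by rw [ht']; exact hle))
    exact hm ⟨t'', by rw [← f.apply_symm_apply (toLex (n₀, m)), ht'']⟩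
  exact ⟨S, n₀, K0, K2, K4, K5, rfl, t₁, ht₁⟩

section MainIso
variable {L Lt M : Type} [LinearOrder L] [LinearOrder Lt] [LinearOrder M]
  (f : (L ⊕ₗ Lt) ≃o ℕ ×ₗ M) (n₀ : ℕ) (S : Set M)

noncomputable def isoS :
    ↥{t : Lt | (ofLex (f (toLex (inr t)))).1 = n₀} ≃o
      ↥{m : M | ∃ t : Lt, f (toLex (inr t)) = toLex (n₀, m)} := by
  refine StrictMono.orderIsoOfSurjective
    (fun u => ⟨(ofLex (f (toLex (inr u.1)))).2, u.1,
      (congrArg toLex (show ((ofLex (f (toLex (inr u.1)))).1, (ofLex (f (toLex (inr u.1)))).2)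
        = (n₀, (ofLex (f (toLex (inr u.1)))).2) by rw [u.2]))⟩) ?_ ?_
  · intro u u' h
    have h' : toLex ((ofLex (f (toLex (inr u.1)))).1, (ofLex (f (toLex (inr u.1)))).2)
        < toLex ((ofLex (f (toLex (inr u'.1)))).1, (ofLex (f (toLex (inr u'.1)))).2) :=
      f.strictMono (Sum.Lex.inr_lt_inr_iff.mpr h)
    rcases (Prod.Lex.toLex_lt_toLex).mp h' with h1 | ⟨_, h2⟩
    · have := u.2
      have := u'.2
      simp only [Set.mem_setOf_eq] at *
      omega
    · exact Subtype.mk_lt_mk.mpr h2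
  · rintro ⟨m, t, ht⟩
    refine ⟨⟨t, show (ofLex (f (toLex (inr t)))).1 = n₀ by rw [ht]; rfl⟩, Subtype.ext ?_⟩
    show (ofLex (f (toLex (inr t)))).2 = m
    rw [ht]
    rfl


noncomputable def thetaIso
    (K0 : ∀ t : Lt, n₀ ≤ (ofLex (f (toLex (inr t)))).1)
    (K4 : ∀ l : L, (ofLex (f (toLex (inl l)))).1 ≤ n₀ ∧
      ((ofLex (f (toLex (inl l)))).1 = n₀ → (ofLex (f (toLex (inl l)))).2 ∉ S))
    (K5 : ∀ m m' : M, m ∉ S → m' ∈ S → m < m')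
    (hS : S = {m : M | ∃ t : Lt, f (toLex (inr t)) = toLex (n₀, m)}) :
    (ℕ ×ₗ (L ⊕ₗ ↥S)) ≃o (ℕ ×ₗ M) := by
  refine StrictMono.orderIsoOfSurjective
    (fun x => Sum.elim
      (fun l : L => toLex ((ofLex x).1 * (n₀+1) + (ofLex (f (toLex (inl l)))).1,
        (ofLex (f (toLex (inl l)))).2))
      (fun b : ↥S => toLex ((ofLex x).1 * (n₀+1) + n₀, b.1))
      (ofLex (ofLex x).2)) ?_ ?_
  · intro x y h
    rcases x with ⟨k, w⟩
    rcases y with ⟨k', w'⟩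
    have harith : ∀ (e e' : ℕ), e ≤ n₀ → k < k' → k * (n₀+1) + e < k' * (n₀+1) + e' := by
      intro e e' he hk
      have h1 : (k+1) * (n₀+1) ≤ k' * (n₀+1) := Nat.mul_le_mul_right _ hk
      have h2 : (k+1) * (n₀+1) = k * (n₀+1) + (n₀+1) := by ring
      omega
    rcases (Prod.Lex.toLex_lt_toLex).mp h with h1 | ⟨h1, h2⟩
    · simp only at h1
      rcases w with l | b <;> rcases w' with l' | b'
      · exact Prod.Lex.left _ _ (harith _ _ (K4 l).1 h1)
      · exact Prod.Lex.left _ _ (harith _ _ (K4 l).1 h1)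
      · exact Prod.Lex.left _ _ (harith _ _ le_rfl h1)
      · exact Prod.Lex.left _ _ (harith _ _ le_rfl h1)
    · simp only at h1
      subst h1
      rcases w with l | b <;> rcases w' with l' | b'
      · have h3 : toLex ((ofLex (f (toLex (inl l)))).1, (ofLex (f (toLex (inl l)))).2)
            < toLex ((ofLex (f (toLex (inl l')))).1, (ofLex (f (toLex (inl l')))).2) :=
          f.strictMono (Sum.Lex.inl_lt_inl_iff.mpr (Sum.lex_inl_inl.mp h2))
        rcases (Prod.Lex.toLex_lt_toLex).mp h3 with h4 | ⟨h4, h5⟩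
        · exact Prod.Lex.left _ _ (show k * (n₀+1) + (ofLex (f (toLex (inl l)))).1
            < k * (n₀+1) + (ofLex (f (toLex (inl l')))).1 by omega)
        · exact (Prod.Lex.toLex_lt_toLex).mpr (Or.inr ⟨show k * (n₀+1) + (ofLex (f (toLex (inl l)))).1
            = k * (n₀+1) + (ofLex (f (toLex (inl l')))).1 by omega, h5⟩)
      · rcases lt_or_eq_of_le (K4 l).1 with h4 | h4
        · exact Prod.Lex.left _ _ (show k * (n₀+1) + (ofLex (f (toLex (inl l)))).1
            < k * (n₀+1) + n₀ by omega)
        · refine (Prod.Lex.toLex_lt_toLex).mpr (Or.inr ⟨show k * (n₀+1) + (ofLex (f (toLex (inl l)))).1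
            = k * (n₀+1) + n₀ by omega, ?_⟩)
          exact K5 _ _ ((K4 l).2 h4) b'.2
      · exact absurd h2 (by exact Sum.lex_inr_inl)
      · exact Prod.Lex.right _ (Subtype.coe_lt_coe.2 (Sum.lex_inr_inr.mp h2))
  · intro z
    rcases z with ⟨j, m⟩
    have hmod : j % (n₀+1) ≤ n₀ := by
      have := Nat.mod_lt j (show 0 < n₀+1 by omega)
      omega
    have hdm : j / (n₀+1) * (n₀+1) + j % (n₀+1) = j := by
      have h1 := Nat.div_add_mod j (n₀+1)
      have h2 := Nat.mul_comm (n₀+1) (j / (n₀+1))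
      omega
    by_cases hrs : j % (n₀+1) = n₀ ∧ m ∈ S
    · refine ⟨toLex (j / (n₀+1), toLex (inr ⟨m, hrs.2⟩)), ?_⟩
      show toLex (j / (n₀+1) * (n₀+1) + n₀, m) = toLex ((j : ℕ), m)
      have hj : j / (n₀+1) * (n₀+1) + n₀ = j := by
        have := hrs.1
        omega
      rw [hj]
    · have hl : ∃ l : L, f (toLex (inl l)) = toLex (j % (n₀+1), m) := by
        rcases hc : f.symm (toLex (j % (n₀+1), m)) with l | t
        · exact ⟨l, by rw [← f.apply_symm_apply (toLex ((j % (n₀+1) : ℕ), m)), hc]; rfl⟩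
        · exfalso
          have hft : f (toLex (inr t)) = toLex (j % (n₀+1), m) := by
            rw [← f.apply_symm_apply (toLex ((j % (n₀+1) : ℕ), m)), hc]; rfl
          have hidx : (ofLex (f (toLex (inr t)))).1 = j % (n₀+1) := by rw [hft]; rfl
          have hK0 := K0 t
          have hreq : j % (n₀+1) = n₀ := by omega
          refine hrs ⟨hreq, ?_⟩
          rw [hS]
          exact ⟨t, by rw [hft, hreq]⟩
      obtain ⟨l, hfl⟩ := hl
      refine ⟨toLex (j / (n₀+1), toLex (inl l)), ?_⟩
      show toLex (j / (n₀+1) * (n₀+1) + (ofLex (f (toLex (inl l)))).1,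
        (ofLex (f (toLex (inl l)))).2) = toLex ((j : ℕ), m)
      rw [hfl]
      show toLex (j / (n₀+1) * (n₀+1) + j % (n₀+1), m) = toLex ((j : ℕ), m)
      rw [hdm]


noncomputable def sigmaIso
    (K0 : ∀ t : Lt, n₀ ≤ (ofLex (f (toLex (inr t)))).1)
    (K2 : ∀ (n : ℕ) (m : M), n₀ < n → ∃ t, f (toLex (inr t)) = toLex (n, m)) :
    Lt ≃o ((↥{m : M | ∃ t : Lt, f (toLex (inr t)) = toLex (n₀, m)}) ⊕ₗ (ℕ ×ₗ M)) := by
  refine StrictMono.orderIsoOfSurjective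
    (fun t => if h : (ofLex (f (toLex (inr t)))).1 = n₀
      then toLex (inl ⟨(ofLex (f (toLex (inr t)))).2, t,
        (congrArg toLex (show ((ofLex (f (toLex (inr t)))).1, (ofLex (f (toLex (inr t)))).2)
          = (n₀, (ofLex (f (toLex (inr t)))).2) by rw [h]))⟩)
      else toLex (inr (toLex ((ofLex (f (toLex (inr t)))).1 - (n₀+1),
        (ofLex (f (toLex (inr t)))).2)))) ?_ ?_
  · intro t t' h
    beta_reduce
    have h3 : toLex ((ofLex (f (toLex (inr t)))).1, (ofLex (f (toLex (inr t)))).2)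
        < toLex ((ofLex (f (toLex (inr t')))).1, (ofLex (f (toLex (inr t')))).2) :=
      f.strictMono (Sum.Lex.inr_lt_inr_iff.mpr h)
    have hK0 := K0 t
    have hK0' := K0 t'
    by_cases h1 : (ofLex (f (toLex (inr t)))).1 = n₀ <;>
      by_cases h2 : (ofLex (f (toLex (inr t')))).1 = n₀
    · rw [dif_pos h1, dif_pos h2]
      rcases (Prod.Lex.toLex_lt_toLex).mp h3 with h4 | ⟨h4, h5⟩
      · omega
      · exact Sum.Lex.inl (Subtype.mk_lt_mk.mpr h5)
    · rw [dif_pos h1, dif_neg h2]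
      exact Sum.Lex.sep _ _
    · exfalso
      rcases (Prod.Lex.toLex_lt_toLex).mp h3 with h4 | ⟨h4, h5⟩ <;> omega
    · rw [dif_neg h1, dif_neg h2]
      rcases (Prod.Lex.toLex_lt_toLex).mp h3 with h4 | ⟨h4, h5⟩
      · exact Sum.Lex.inr (Prod.Lex.left _ _ (by omega))
      · exact Sum.Lex.inr ((Prod.Lex.toLex_lt_toLex).mpr (Or.inr ⟨by omega, h5⟩))
  · intro z
    rcases z with mm | p
    · obtain ⟨m, t, ht⟩ := mm
      have hidx : (ofLex (f (toLex (inr t)))).1 = n₀ := by rw [ht]; rfl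
      refine ⟨t, ?_⟩
      show (if h : (ofLex (f (toLex (inr t)))).1 = n₀ then _ else _) = _
      rw [dif_pos hidx]
      refine congrArg (fun z => toLex (inl z)) (Subtype.ext ?_)
      show (ofLex (f (toLex (inr t)))).2 = m
      rw [ht]
      rfl
    · obtain ⟨t, ht⟩ := K2 ((ofLex p).1 + (n₀+1)) (ofLex p).2 (by omega)
      have hidx : (ofLex (f (toLex (inr t)))).1 = (ofLex p).1 + (n₀+1) := by rw [ht]; rfl
      refine ⟨t, ?_⟩
      show (if h : (ofLex (f (toLex (inr t)))).1 = n₀ then _ else _) = _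
      rw [dif_neg (by omega)]
      refine congrArg (fun z => toLex (inr z)) ?_
      show toLex ((ofLex (f (toLex (inr t)))).1 - (n₀+1), (ofLex (f (toLex (inr t)))).2)
        = p
      rw [ht]
      show toLex ((ofLex p).1 + (n₀+1) - (n₀+1), (ofLex p).2) = p
      rw [Nat.add_sub_cancel]
      exact congrArg toLex rfl


end MainIso

/-- Any (nonempty) suffix of an ω-sum of finitely presented linear orders is an
ω-sum: if `L' = L + L̃` with `L̃` nonempty and `L' ≅ ω ×ₗ M` for some `M`, then
there is a finitely presented `L̄` with `L' ≅ ω ×ₗ (L + L̄)` and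
`L̃ ≅ ω ×ₗ (L̄ + L)`. -/
theorem stmt_13 (L Lt : Type) [LinearOrder L] [LinearOrder Lt]
    (hL : IsFP L) (hLt : IsFP Lt) (hne : Nonempty Lt)
    (h : ∃ (M : Type) (_ : LinearOrder M), Nonempty ((L ⊕ₗ Lt) ≃o (ℕ ×ₗ M))) :
    ∃ (Lb : Type) (_ : LinearOrder Lb), IsFP Lb ∧
      Nonempty ((L ⊕ₗ Lt) ≃o (ℕ ×ₗ (L ⊕ₗ Lb))) ∧
      Nonempty (Lt ≃o (ℕ ×ₗ (Lb ⊕ₗ L))) := by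
  obtain ⟨M, instM, ⟨f⟩⟩ := h
  obtain ⟨t₀⟩ := hne
  obtain ⟨S, n₀, K0, K2, K4, K5, hS, t₁, ht₁⟩ := main_aux t₀ f
  have hs' : IsLowerSet {t : Lt | (ofLex (f (toLex (inr t)))).1 = n₀} := by
    intro a b hba ha
    have hmono : toLex ((ofLex (f (toLex (inr b)))).1, (ofLex (f (toLex (inr b)))).2)
        ≤ toLex ((ofLex (f (toLex (inr a)))).1, (ofLex (f (toLex (inr a)))).2) :=
      f.monotone (Sum.Lex.inr_le_inr_iff.mpr hba)
    have hb0 := K0 b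
    simp only [Set.mem_setOf_eq] at ha ⊢
    rcases (Prod.Lex.toLex_le_toLex).mp hmono with h1 | ⟨h1, _⟩ <;> omega
  have hFPS : IsFP ↥{m : M | ∃ t : Lt, f (toLex (inr t)) = toLex (n₀, m)} :=
    IsFP.iso (isFP_lowerSet hLt _ hs') ⟨isoS f n₀⟩
  subst hS
  refine ⟨_, inferInstance, hFPS,
    ⟨f.trans (thetaIso f n₀ _ K0 K4 K5 rfl).symm⟩, ?_⟩
  exact ⟨(sigmaIso f n₀ K0 K2).trans
    ((sumLexCongrIso (OrderIso.refl _) (thetaIso f n₀ _ K0 K4 K5 rfl).symm).trans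
      (regroupIso _ L))⟩
end

section
/- If L ∈ LO_fp is finitely presented and L = L₁ + L₂ with L₁, L₂ nonempty, then L₁ and L₂ are finitely presented. -/
lemma isFP_congr {A B : Type} [LinearOrder A] [LinearOrder B] (e : A ≃o B) (h : IsFP A) : IsFP B :=
  h.iso ⟨e⟩

lemma isFP_of_isEmpty (A : Type) [LinearOrder A] [IsEmpty A] : IsFP A :=
  isFP_congr { toEquiv := Equiv.equivOfIsEmpty (Fin 0) A,
               map_rel_iff' := fun {a} => isEmptyElim a } IsFP.zero

lemma isFP_finProd_s14 {A : Type} [LinearOrder A] (h : IsFP A) : ∀ n, IsFP (Fin n ×ₗ A)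
  | 0 => by
      have : IsEmpty (Fin 0 ×ₗ A) := ⟨fun x => (ofLex x).1.elim0⟩
      exact isFP_of_isEmpty _
  | (n+1) => by
      have e : (Fin n ×ₗ A) ⊕ₗ A ≃o Fin (n+1) ×ₗ A := by
        refine StrictMono.orderIsoOfSurjective
          (fun x => Sum.elim (fun p => toLex (⟨(ofLex p).1.castSucc, (ofLex p).2⟩ : Fin (n+1) × A))
            (fun a => toLex (⟨Fin.last n, a⟩ : Fin (n+1) × A)) (ofLex x)) ?_ ?_
        · rintro (x|x) (y|y) hxy
          · have hxy' := (Prod.Lex.toLex_lt_toLex (x := ofLex x) (y := ofLex y)).mp (Sum.Lex.inl_lt_inl_iff.mp hxy)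
            show toLex _ < toLex _
            rw [Prod.Lex.lt_iff]
            rcases hxy' with h1 | ⟨h1, h2⟩
            · exact Or.inl (by simpa using h1)
            · exact Or.inr ⟨by simp [h1], h2⟩
          · show toLex _ < toLex _
            rw [Prod.Lex.lt_iff]
            exact Or.inl ((ofLex x).1.castSucc_lt_last)
          · exact absurd hxy Sum.Lex.not_inr_lt_inl
          · show toLex _ < toLex _
            rw [Prod.Lex.lt_iff]
            exact Or.inr ⟨rfl, Sum.Lex.inr_lt_inr_iff.mp hxy⟩
        · rintro ⟨i, a⟩
          rcases Fin.eq_castSucc_or_eq_last i with ⟨j, rfl⟩ | rfl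
          · exact ⟨toLex (Sum.inl (toLex (j, a))), rfl⟩
          · exact ⟨toLex (Sum.inr a), rfl⟩
      exact isFP_congr e ((isFP_finProd_s14 h n).sum h)

lemma isFP_cut {A : Type} [instA : LinearOrder A] (h : IsFP A) :
    ∀ s : Set A, IsLowerSet s → s.Nonempty → sᶜ.Nonempty → IsFP ↥s ∧ IsFP ↥sᶜ := by
  induction h with
  | zero =>
      intro s _ hs _
      obtain ⟨x, -⟩ := hs
      exact x.elim0
  | one =>
      intro s _ hs hsc
      obtain ⟨x, hx⟩ := hs
      obtain ⟨y, hy⟩ := hsc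
      exact absurd (Subsingleton.elim x y ▸ hx) hy
  | @iso A B _ _ hA he IH =>
      intro s hls hs hsc
      obtain ⟨e⟩ := he
      have hls' : IsLowerSet (⇑e ⁻¹' s) := hls.preimage e.monotone
      have e1 : ↥(⇑e ⁻¹' s) ≃o ↥s := by
        refine StrictMono.orderIsoOfSurjective (fun x => ⟨e x.1, x.2⟩) ?_ ?_
        · intro x y hxy
          exact Subtype.mk_lt_mk.mpr (e.strictMono (Subtype.coe_lt_coe.mpr hxy))
        · rintro ⟨b, hb⟩
          exact ⟨⟨e.symm b, by simpa using hb⟩, by simp⟩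
      have e2 : ↥(⇑e ⁻¹' s)ᶜ ≃o ↥sᶜ := by
        refine StrictMono.orderIsoOfSurjective (fun x => ⟨e x.1, x.2⟩) ?_ ?_
        · intro x y hxy
          exact Subtype.mk_lt_mk.mpr (e.strictMono (Subtype.coe_lt_coe.mpr hxy))
        · rintro ⟨b, hb⟩
          exact ⟨⟨e.symm b, by simpa using hb⟩, by simp⟩
      obtain ⟨hb1, hb2⟩ := IH (⇑e ⁻¹' s) hls'
        (by obtain ⟨x, hx⟩ := hs; exact ⟨e.symm x, by simpa using hx⟩)
        (by obtain ⟨x, hx⟩ := hsc; exact ⟨e.symm x, by simpa using hx⟩)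
      exact ⟨isFP_congr e1 hb1, isFP_congr e2 hb2⟩
  | @sum A B _ _ hA hB IHA IHB =>
      intro s hls hs hsc
      set sA : Set A := {a | toLex (Sum.inl a) ∈ s} with hsA_def
      set sB : Set B := {b | toLex (Sum.inr b) ∈ s} with hsB_def
      have hlsA : IsLowerSet sA := fun a b hba ha =>
        hls (Sum.Lex.inl_le_inl_iff.mpr hba) ha
      have hlsB : IsLowerSet sB := fun a b hba ha =>
        hls (Sum.Lex.inr_le_inr_iff.mpr hba) ha
      have hauxA : sB.Nonempty → ∀ a : A, a ∈ sA := by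
        rintro ⟨b, hb⟩ a
        exact hls (Sum.Lex.inl_le_inr a b) hb
      by_cases hsB : sB.Nonempty
      · -- cut lies in B
        have hsAu : ∀ a : A, a ∈ sA := hauxA hsB
        have hsBc : sBᶜ.Nonempty := by
          obtain ⟨x, hx⟩ := hsc
          rcases x with a | b
          · exact absurd (hsAu a) hx
          · exact ⟨b, hx⟩
        have e1 : A ⊕ₗ ↥sB ≃o ↥s := by
          refine StrictMono.orderIsoOfSurjective
            (fun x => Sum.elim (fun a => (⟨toLex (Sum.inl a), hsAu a⟩ : ↥s))
              (fun b => ⟨toLex (Sum.inr b.1), b.2⟩) (ofLex x)) ?_ ?_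
          · rintro (x|x) (y|y) hxy
            · exact Subtype.mk_lt_mk.mpr (Sum.Lex.inl_lt_inl_iff.mpr
                (Sum.Lex.inl_lt_inl_iff.mp hxy))
            · exact Subtype.mk_lt_mk.mpr (Sum.Lex.inl_lt_inr _ _)
            · exact absurd hxy Sum.Lex.not_inr_lt_inl
            · exact Subtype.mk_lt_mk.mpr (Sum.Lex.inr_lt_inr_iff.mpr
                (Subtype.coe_lt_coe.mpr (Sum.Lex.inr_lt_inr_iff.mp hxy)))
          · rintro ⟨x, hx⟩
            rcases x with a | b
            · exact ⟨toLex (Sum.inl a), rfl⟩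
            · exact ⟨toLex (Sum.inr ⟨b, hx⟩), rfl⟩
        have e2 : ↥sBᶜ ≃o ↥sᶜ := by
          refine StrictMono.orderIsoOfSurjective
            (fun b => ⟨toLex (Sum.inr b.1), b.2⟩) ?_ ?_
          · intro x y hxy
            exact Subtype.mk_lt_mk.mpr (Sum.Lex.inr_lt_inr_iff.mpr
              (Subtype.coe_lt_coe.mpr hxy))
          · rintro ⟨x, hx⟩
            rcases x with a | b
            · exact absurd (hsAu a) hx
            · exact ⟨⟨b, hx⟩, rfl⟩
        obtain ⟨hb1, hb2⟩ := IHB sB hlsB hsB hsBc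
        exact ⟨isFP_congr e1 (hA.sum hb1), isFP_congr e2 hb2⟩
      · -- sB empty : cut lies in A
        have hsBe : ∀ b : B, b ∉ sB := fun b hb => hsB ⟨b, hb⟩
        have hsAne : sA.Nonempty := by
          obtain ⟨x, hx⟩ := hs
          rcases x with a | b
          · exact ⟨a, hx⟩
          · exact absurd hx (hsBe b)
        by_cases hsAc : sAᶜ.Nonempty
        · have e1 : ↥sA ≃o ↥s := by
            refine StrictMono.orderIsoOfSurjective
              (fun a => ⟨toLex (Sum.inl a.1), a.2⟩) ?_ ?_
            · intro x y hxy
              exact Subtype.mk_lt_mk.mpr (Sum.Lex.inl_lt_inl_iff.mpr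
                (Subtype.coe_lt_coe.mpr hxy))
            · rintro ⟨x, hx⟩
              rcases x with a | b
              · exact ⟨⟨a, hx⟩, rfl⟩
              · exact absurd hx (hsBe b)
          have e2 : ↥sAᶜ ⊕ₗ B ≃o ↥sᶜ := by
            refine StrictMono.orderIsoOfSurjective
              (fun x => Sum.elim (fun a => (⟨toLex (Sum.inl a.1), a.2⟩ : ↥sᶜ))
                (fun b => ⟨toLex (Sum.inr b), hsBe b⟩) (ofLex x)) ?_ ?_
            · rintro (x|x) (y|y) hxy
              · exact Subtype.mk_lt_mk.mpr (Sum.Lex.inl_lt_inl_iff.mpr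
                  (Subtype.coe_lt_coe.mpr (Sum.Lex.inl_lt_inl_iff.mp hxy)))
              · exact Subtype.mk_lt_mk.mpr (Sum.Lex.inl_lt_inr _ _)
              · exact absurd hxy Sum.Lex.not_inr_lt_inl
              · exact Subtype.mk_lt_mk.mpr (Sum.Lex.inr_lt_inr_iff.mpr
                  (Sum.Lex.inr_lt_inr_iff.mp hxy))
            · rintro ⟨x, hx⟩
              rcases x with a | b
              · exact ⟨toLex (Sum.inl ⟨a, hx⟩), rfl⟩
              · exact ⟨toLex (Sum.inr b), rfl⟩
          obtain ⟨hb1, hb2⟩ := IHA sA hlsA hsAne hsAc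
          exact ⟨isFP_congr e1 hb1, isFP_congr e2 (hb2.sum hB)⟩
        · -- sA = univ : s = inl '' univ
          have hsAu : ∀ a : A, a ∈ sA := by
            intro a; by_contra ha; exact hsAc ⟨a, ha⟩
          have e1 : A ≃o ↥s := by
            refine StrictMono.orderIsoOfSurjective
              (fun a => ⟨toLex (Sum.inl a), hsAu a⟩) ?_ ?_
            · intro x y hxy
              exact Subtype.mk_lt_mk.mpr (Sum.Lex.inl_lt_inl_iff.mpr hxy)
            · rintro ⟨x, hx⟩
              rcases x with a | b
              · exact ⟨a, rfl⟩
              · exact absurd hx (hsBe b)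
          have e2 : B ≃o ↥sᶜ := by
            refine StrictMono.orderIsoOfSurjective
              (fun b => ⟨toLex (Sum.inr b), hsBe b⟩) ?_ ?_
            · intro x y hxy
              exact Subtype.mk_lt_mk.mpr (Sum.Lex.inr_lt_inr_iff.mpr hxy)
            · rintro ⟨x, hx⟩
              rcases x with a | b
              · exact absurd (hsAu a) hx
              · exact ⟨b, rfl⟩
          exact ⟨isFP_congr e1 hA, isFP_congr e2 hB⟩
  | @omega A _ hA IH =>
      intro s hls hs hsc
      classical
      have hex : ∃ n : ℕ, ∃ a : A, toLex (n, a) ∉ s := by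
        obtain ⟨x, hx⟩ := hsc
        obtain ⟨m, a⟩ := x
        exact ⟨m, a, hx⟩
      set n := Nat.find hex with hn_def
      obtain ⟨a₀, ha₀⟩ := Nat.find_spec hex
      have hmin : ∀ m, m < n → ∀ a : A, toLex (m, a) ∈ s := by
        intro m hm a
        by_contra hma
        exact Nat.find_min hex hm ⟨a, hma⟩
      have hkey : ∀ m, n < m → ∀ a : A, toLex (m, a) ∉ s := by
        intro m hm a hma
        exact ha₀ (hls (le_of_lt ((Prod.Lex.toLex_lt_toLex (x := (n, a₀)) (y := (m, a))).mpr (Or.inl hm))) hma)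
      set t : Set A := {a | toLex ((n : ℕ), a) ∈ s} with ht_def
      have hlt : IsLowerSet t := fun a b hba ha =>
        hls ((Prod.Lex.toLex_le_toLex (x := (n, b)) (y := (n, a))).mpr (Or.inr ⟨rfl, hba⟩)) ha
      have htc : tᶜ.Nonempty := ⟨a₀, ha₀⟩
      have hfp : IsFP ↥t ∧ IsFP ↥tᶜ := by
        by_cases ht : t.Nonempty
        · exact IH t hlt ht htc
        · have hte : ∀ a : A, a ∉ t := fun a ha => ht ⟨a, ha⟩
          have : IsEmpty ↥t := ⟨fun x => hte x.1 x.2⟩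
          refine ⟨isFP_of_isEmpty _, isFP_congr ?_ hA⟩
          exact StrictMono.orderIsoOfSurjective (fun a => (⟨a, hte a⟩ : ↥tᶜ))
            (fun x y hxy => Subtype.mk_lt_mk.mpr hxy) (fun x => ⟨x.1, rfl⟩)
      have e1 : (Fin n ×ₗ A) ⊕ₗ ↥t ≃o ↥s := by
        refine StrictMono.orderIsoOfSurjective
          (fun x => Sum.elim
            (fun p => (⟨toLex ((ofLex p).1.val, (ofLex p).2), hmin _ (ofLex p).1.isLt _⟩ : ↥s))
            (fun a => ⟨toLex ((n : ℕ), a.1), a.2⟩) (ofLex x)) ?_ ?_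
        · rintro (x|x) (y|y) hxy
          · obtain ⟨i, a⟩ := x; obtain ⟨j, b⟩ := y
            have hxy' := (Prod.Lex.toLex_lt_toLex (x := (i, a)) (y := (j, b))).mp (Sum.Lex.inl_lt_inl_iff.mp hxy)
            refine Subtype.mk_lt_mk.mpr ((Prod.Lex.toLex_lt_toLex).mpr ?_)
            rcases hxy' with h1 | ⟨h1, h2⟩
            · exact Or.inl (by exact_mod_cast h1)
            · exact Or.inr ⟨by exact_mod_cast congrArg Fin.val h1, h2⟩
          · obtain ⟨i, a⟩ := x
            exact Subtype.mk_lt_mk.mpr ((Prod.Lex.toLex_lt_toLex).mpr (Or.inl i.isLt))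
          · exact absurd hxy Sum.Lex.not_inr_lt_inl
          · exact Subtype.mk_lt_mk.mpr ((Prod.Lex.toLex_lt_toLex).mpr
              (Or.inr ⟨rfl, Subtype.coe_lt_coe.mpr (Sum.Lex.inr_lt_inr_iff.mp hxy)⟩))
        · rintro ⟨x, hx⟩
          obtain ⟨m, a⟩ := x
          rcases lt_trichotomy m n with hm | rfl | hm
          · exact ⟨toLex (Sum.inl (toLex (⟨m, hm⟩, a))), rfl⟩
          · exact ⟨toLex (Sum.inr ⟨a, hx⟩), rfl⟩
          · exact absurd hx (hkey m hm a)
      have e2 : ↥tᶜ ⊕ₗ (ℕ ×ₗ A) ≃o ↥sᶜ := by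
        refine StrictMono.orderIsoOfSurjective
          (fun x => Sum.elim
            (fun a => (⟨toLex ((n : ℕ), a.1), a.2⟩ : ↥sᶜ))
            (fun q => ⟨toLex (n + 1 + (ofLex q).1, (ofLex q).2),
              hkey _ (by omega) _⟩) (ofLex x)) ?_ ?_
        · rintro (x|x) (y|y) hxy
          · exact Subtype.mk_lt_mk.mpr ((Prod.Lex.toLex_lt_toLex).mpr
              (Or.inr ⟨rfl, Subtype.coe_lt_coe.mpr (Sum.Lex.inl_lt_inl_iff.mp hxy)⟩))
          · obtain ⟨k, b⟩ := y
            exact Subtype.mk_lt_mk.mpr ((Prod.Lex.toLex_lt_toLex).mpr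
              (Or.inl (show (n : ℕ) < n + 1 + k by omega)))
          · exact absurd hxy Sum.Lex.not_inr_lt_inl
          · obtain ⟨k, a⟩ := x; obtain ⟨l, b⟩ := y
            have hxy' := (Prod.Lex.toLex_lt_toLex (x := (k, a)) (y := (l, b))).mp (Sum.Lex.inr_lt_inr_iff.mp hxy)
            refine Subtype.mk_lt_mk.mpr ((Prod.Lex.toLex_lt_toLex).mpr ?_)
            rcases hxy' with h1 | ⟨h1, h2⟩
            · have h1' : k < l := h1
              exact Or.inl (show n + 1 + k < n + 1 + l by omega)
            · have h1' : k = l := h1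
              exact Or.inr ⟨show n + 1 + k = n + 1 + l by omega, h2⟩
        · rintro ⟨x, hx⟩
          obtain ⟨m, a⟩ := x
          rcases lt_trichotomy m n with hm | rfl | hm
          · exact absurd (hmin m hm a) hx
          · exact ⟨toLex (Sum.inl ⟨a, hx⟩), rfl⟩
          · obtain ⟨k, rfl⟩ : ∃ k, m = n + 1 + k := ⟨m - (n + 1), by omega⟩
            exact ⟨toLex (Sum.inr (toLex (k, a))), rfl⟩
      exact ⟨isFP_congr e1 ((isFP_finProd_s14 hA n).sum hfp.1),
             isFP_congr e2 (hfp.2.sum hA.omega)⟩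
  | @omegaStar A _ hA IH =>
      intro s hls hs hsc
      classical
      have hex : ∃ n : ℕ, ∃ a : A, toLex (OrderDual.toDual n, a) ∈ s := by
        obtain ⟨x, hx⟩ := hs
        obtain ⟨m, a⟩ := x
        exact ⟨OrderDual.ofDual m, a, hx⟩
      set n := Nat.find hex with hn_def
      obtain ⟨a₀, ha₀⟩ := Nat.find_spec hex
      have hmin : ∀ m, m < n → ∀ a : A, toLex (OrderDual.toDual m, a) ∉ s := by
        intro m hm a hma
        exact Nat.find_min hex hm ⟨a, hma⟩
      have hkey : ∀ m, n < m → ∀ a : A, toLex (OrderDual.toDual m, a) ∈ s := by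
        intro m hm a
        refine hls (le_of_lt ((Prod.Lex.toLex_lt_toLex (x := (OrderDual.toDual m, a)) (y := (OrderDual.toDual n, a₀))).mpr (Or.inl ?_))) ha₀
        exact OrderDual.toDual_lt_toDual.mpr hm
      set t : Set A := {a | toLex (OrderDual.toDual n, a) ∈ s} with ht_def
      have hlt : IsLowerSet t := fun a b hba ha =>
        hls ((Prod.Lex.toLex_le_toLex (x := (OrderDual.toDual n, b)) (y := (OrderDual.toDual n, a))).mpr
          (Or.inr ⟨rfl, hba⟩)) ha
      have ht : t.Nonempty := ⟨a₀, ha₀⟩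
      have hfp : IsFP ↥t ∧ IsFP ↥tᶜ := by
        by_cases htc : tᶜ.Nonempty
        · exact IH t hlt ht htc
        · have htu : ∀ a : A, a ∈ t := by
            intro a; by_contra ha; exact htc ⟨a, ha⟩
          have : IsEmpty ↥tᶜ := ⟨fun x => x.2 (htu x.1)⟩
          refine ⟨isFP_congr ?_ hA, isFP_of_isEmpty _⟩
          exact StrictMono.orderIsoOfSurjective (fun a => (⟨a, htu a⟩ : ↥t))
            (fun x y hxy => Subtype.mk_lt_mk.mpr hxy) (fun x => ⟨x.1, rfl⟩)
      have e1 : (ℕᵒᵈ ×ₗ A) ⊕ₗ ↥t ≃o ↥s := by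
        refine StrictMono.orderIsoOfSurjective
          (fun x => Sum.elim
            (fun q => (⟨toLex (OrderDual.toDual (n + 1 + OrderDual.ofDual (ofLex q).1),
                (ofLex q).2), hkey _ (by omega) _⟩ : ↥s))
            (fun a => ⟨toLex (OrderDual.toDual n, a.1), a.2⟩) (ofLex x)) ?_ ?_
        · rintro (x|x) (y|y) hxy
          · obtain ⟨k, a⟩ := x; obtain ⟨l, b⟩ := y
            have hxy' := (Prod.Lex.toLex_lt_toLex (x := (k, a)) (y := (l, b))).mp (Sum.Lex.inl_lt_inl_iff.mp hxy)
            refine Subtype.mk_lt_mk.mpr ((Prod.Lex.toLex_lt_toLex).mpr ?_)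
            rcases hxy' with h1 | ⟨h1, h2⟩
            · have h1' : (OrderDual.ofDual l : ℕ) < OrderDual.ofDual k := h1
              exact Or.inl (OrderDual.toDual_lt_toDual.mpr
                (show n + 1 + OrderDual.ofDual l < n + 1 + OrderDual.ofDual k by omega))
            · have h1' : (OrderDual.ofDual k : ℕ) = OrderDual.ofDual l := congrArg _ h1
              refine Or.inr ⟨?_, h2⟩
              show (OrderDual.toDual (n + 1 + OrderDual.ofDual k) : ℕᵒᵈ) =
                OrderDual.toDual (n + 1 + OrderDual.ofDual l)
              rw [h1']
          · obtain ⟨k, a⟩ := x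
            refine Subtype.mk_lt_mk.mpr ((Prod.Lex.toLex_lt_toLex).mpr
              (Or.inl (OrderDual.toDual_lt_toDual.mpr
                (show n < n + 1 + OrderDual.ofDual k by omega))))
          · exact absurd hxy Sum.Lex.not_inr_lt_inl
          · exact Subtype.mk_lt_mk.mpr ((Prod.Lex.toLex_lt_toLex).mpr
              (Or.inr ⟨rfl, Subtype.coe_lt_coe.mpr (Sum.Lex.inr_lt_inr_iff.mp hxy)⟩))
        · rintro ⟨x, hx⟩
          obtain ⟨m, a⟩ := x
          rcases lt_trichotomy (OrderDual.ofDual m) n with hm | hm | hm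
          · exact absurd hx (hmin _ hm a)
          · have hm' : m = OrderDual.toDual n := by rw [← hm]; rfl
            subst hm'
            exact ⟨toLex (Sum.inr ⟨a, hx⟩), rfl⟩
          · obtain ⟨k, hk⟩ : ∃ k, OrderDual.ofDual m = n + 1 + k :=
              ⟨OrderDual.ofDual m - (n + 1), by omega⟩
            have hm' : m = OrderDual.toDual (n + 1 + k) := by rw [← hk]; rfl
            subst hm'
            exact ⟨toLex (Sum.inl (toLex (OrderDual.toDual k, a))), rfl⟩
      have e2 : ↥tᶜ ⊕ₗ (Fin n ×ₗ A) ≃o ↥sᶜ := by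
        refine StrictMono.orderIsoOfSurjective
          (fun x => Sum.elim
            (fun a => (⟨toLex (OrderDual.toDual n, a.1), a.2⟩ : ↥sᶜ))
            (fun p => ⟨toLex (OrderDual.toDual (n - 1 - (ofLex p).1.val), (ofLex p).2),
              hmin _ (by have := (ofLex p).1.isLt; omega) _⟩) (ofLex x)) ?_ ?_
        · rintro (x|x) (y|y) hxy
          · exact Subtype.mk_lt_mk.mpr ((Prod.Lex.toLex_lt_toLex).mpr
              (Or.inr ⟨rfl, Subtype.coe_lt_coe.mpr (Sum.Lex.inl_lt_inl_iff.mp hxy)⟩))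
          · obtain ⟨i, b⟩ := y
            have hi := i.isLt
            refine Subtype.mk_lt_mk.mpr ((Prod.Lex.toLex_lt_toLex).mpr
              (Or.inl (OrderDual.toDual_lt_toDual.mpr
                (show n - 1 - (i : ℕ) < n by omega))))
          · exact absurd hxy Sum.Lex.not_inr_lt_inl
          · obtain ⟨i, a⟩ := x; obtain ⟨j, b⟩ := y
            have hxy' := (Prod.Lex.toLex_lt_toLex (x := (i, a)) (y := (j, b))).mp (Sum.Lex.inr_lt_inr_iff.mp hxy)
            refine Subtype.mk_lt_mk.mpr ((Prod.Lex.toLex_lt_toLex).mpr ?_)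
            rcases hxy' with h1 | ⟨h1, h2⟩
            · have h1' : (i : ℕ) < j := h1
              have hj := j.isLt
              exact Or.inl (OrderDual.toDual_lt_toDual.mpr
                (show n - 1 - (j : ℕ) < n - 1 - (i : ℕ) by omega))
            · have h1' : (i : ℕ) = j := congrArg Fin.val h1
              refine Or.inr ⟨?_, h2⟩
              show (OrderDual.toDual (n - 1 - (i : ℕ)) : ℕᵒᵈ) =
                OrderDual.toDual (n - 1 - (j : ℕ))
              rw [h1']
        · rintro ⟨x, hx⟩
          obtain ⟨m, a⟩ := x
          rcases lt_trichotomy (OrderDual.ofDual m) n with hm | hm | hm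
          · obtain ⟨i, hi, hk⟩ : ∃ i, i < n ∧ OrderDual.ofDual m = n - 1 - i :=
              ⟨n - 1 - OrderDual.ofDual m, by omega, by omega⟩
            have hm' : m = OrderDual.toDual (n - 1 - i) := by rw [← hk]; rfl
            subst hm'
            exact ⟨toLex (Sum.inr (toLex (⟨i, hi⟩, a))), rfl⟩
          · have hm' : m = OrderDual.toDual n := by rw [← hm]; rfl
            subst hm'
            exact ⟨toLex (Sum.inl ⟨a, hx⟩), rfl⟩
          · exact absurd (hkey _ hm a) hx
      exact ⟨isFP_congr e1 (hA.omegaStar.sum hfp.1),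
             isFP_congr e2 (hfp.2.sum (isFP_finProd_s14 hA n))⟩

/-- If a finitely presented linear order is a sum `L₁ + L₂` of two nonempty
linear orders, then both summands are finitely presented. -/
theorem stmt_14 (L₁ L₂ : Type) [LinearOrder L₁] [LinearOrder L₂]
    (h : IsFP (L₁ ⊕ₗ L₂)) (h₁ : Nonempty L₁) (h₂ : Nonempty L₂) :
    IsFP L₁ ∧ IsFP L₂ := by
  set s : Set (L₁ ⊕ₗ L₂) := {x | ∃ a, x = toLex (Sum.inl a)} with hs_def
  have hls : IsLowerSet s := by
    rintro x y hle ⟨a, rfl⟩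
    rcases y with b | b
    · exact ⟨b, rfl⟩
    · exact absurd hle Sum.Lex.not_inr_le_inl
  have hne : s.Nonempty := ⟨toLex (Sum.inl h₁.some), h₁.some, rfl⟩
  have hnec : sᶜ.Nonempty := ⟨toLex (Sum.inr h₂.some), by
    rintro ⟨a, ha⟩
    exact Sum.inr_ne_inl (toLex.injective ha)⟩
  obtain ⟨hfp1, hfp2⟩ := isFP_cut h s hls hne hnec
  have e1 : ↥s ≃o L₁ := by
    refine (StrictMono.orderIsoOfSurjective (fun a : L₁ => (⟨toLex (Sum.inl a), a, rfl⟩ : ↥s))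
      (fun x y hxy => Subtype.mk_lt_mk.mpr (Sum.Lex.inl_lt_inl_iff.mpr hxy)) ?_).symm
    rintro ⟨x, a, rfl⟩
    exact ⟨a, rfl⟩
  have e2 : ↥sᶜ ≃o L₂ := by
    refine (StrictMono.orderIsoOfSurjective (fun b : L₂ => (⟨toLex (Sum.inr b), by
      rintro ⟨a, ha⟩; exact Sum.inr_ne_inl (toLex.injective ha)⟩ : ↥sᶜ))
      (fun x y hxy => Subtype.mk_lt_mk.mpr (Sum.Lex.inr_lt_inr_iff.mpr hxy)) ?_).symm
    rintro ⟨x, hx⟩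
    rcases x with a | b
    · exact absurd ⟨a, rfl⟩ hx
    · exact ⟨b, rfl⟩
  exact ⟨isFP_congr e1 hfp1, isFP_congr e2 hfp2⟩
end
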